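/- arXiv:2504.02549 — 2 statements merged into one kernel-verified Lean document; each statement's English description precedes it below -/
import Mathlib

section
/- For all integers m, n ≥ 0: the coface maps satisfy d_i^{m,n+1} ∘ d_j^{m,n} = d_{j+1}^{m,n+1} ∘ d_i^{m,n} for all 0 ≤ i ≤ j ≤ m+n+1, and consequently d^{m,n+1} ∘ d^{m,n} = 0 as a ℚ-linear map dk_{m,n} → dk_{m,n+2}. -/
noncomputable section

open scoped TensorProduct

attribute [local instance 100] LieRing.ofAssociativeRing

/-- The free unital associative algebra over `ℚ` on `N` generators. -/
abbrev Ass (N : ℕ) : Type := FreeAlgebra ℚ (Fin N)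

/-- The `i`-th generator `x_i`. -/
def gen {N : ℕ} (i : Fin N) : Ass N := FreeAlgebra.ι ℚ i

/-- The monomial (word) associated to a list of generator indices. -/
def wordProd {N : ℕ} (l : List (Fin N)) : Ass N := (l.map gen).prod

/-- Extend a function on words (monomials) to a `ℚ`-linear map on the free algebra,
using the monomial basis. -/
def liftWord {N : ℕ} {A : Type} [AddCommGroup A] [Module ℚ A]
    (f : List (Fin N) → A) : Ass N →ₗ[ℚ] A :=
  (FreeAlgebra.basisFreeMonoid ℚ (Fin N)).constr ℚ fun w => f w.toList

/-- `μ_gr` on a word. -/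
def muWord {N : ℕ} : List (Fin N) → Ass N
  | [] => 0
  | [_] => 0
  | a :: b :: t => (if a = b then -(wordProd (a :: t)) else 0) + gen a * muWord (b :: t)

/-- The linearized self-intersection operation `μ_gr`. -/
def muGr (N : ℕ) : Ass N →ₗ[ℚ] Ass N := liftWord muWord

/-- The antipode: the anti-automorphism `ι` with `ι(x_i) = -x_i`, as a linear map. -/
def iotaMap (N : ℕ) : Ass N →ₗ[ℚ] Ass N :=
  liftWord fun l => ((-1 : ℚ) ^ l.length) • wordProd l.reverse

/-- The (right) partial derivative `∂_i`, characterized on `lie_N` by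
`a = Σ_i (∂_i a) x_i`. -/
def partialD {N : ℕ} (i : Fin N) : Ass N →ₗ[ℚ] Ass N :=
  liftWord fun l =>
    match l.getLast? with
    | some a => if a = i then wordProd l.dropLast else 0
    | none => 0

/-- `η_gr` on a pair of words. -/
def etaWord {N : ℕ} (l r : List (Fin N)) : Ass N :=
  match l.getLast?, r with
  | some a, b :: t => if a = b then -(wordProd (l.dropLast ++ a :: t)) else 0
  | _, _ => 0

/-- The linearized homotopy intersection form `η_gr`. -/
def etaGr (N : ℕ) : Ass N →ₗ[ℚ] Ass N →ₗ[ℚ] Ass N :=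
  liftWord fun l => liftWord fun r => etaWord l r

/-- Degree-`k` homogeneous part of a free algebra (word-length grading). -/
def homogS (X : Type) (k : ℕ) : Submodule ℚ (FreeAlgebra ℚ X) :=
  Submodule.span ℚ {z | ∃ l : List X, l.length = k ∧ z = (l.map (FreeAlgebra.ι ℚ)).prod}

/-- The projection onto the degree-`k` homogeneous component. -/
def homogComp {N : ℕ} (k : ℕ) : Ass N →ₗ[ℚ] Ass N :=
  liftWord fun l => if l.length = k then wordProd l else 0

/-- The free Lie algebra on `x_1, …, x_N`, as the Lie subalgebra of `Ass N`
(with the commutator bracket) generated by the generators. -/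
def lieN (N : ℕ) : LieSubalgebra ℚ (Ass N) :=
  LieSubalgebra.lieSpan ℚ (Ass N) (Set.range (gen (N := N)))

/-- The generator `x_i` as an element of `lie_N`. -/
def genL (N : ℕ) (i : Fin N) : lieN N :=
  ⟨gen i, LieSubalgebra.subset_lieSpan ⟨i, rfl⟩⟩

/-- Substitution: the algebra endomorphism of `ass_2` with `x ↦ p`, `y ↦ q`. -/
def sub2 (p q : Ass 2) : Ass 2 →ₐ[ℚ] Ass 2 := FreeAlgebra.lift ℚ ![p, q]

/-- `x`. -/
def xA : Ass 2 := gen 0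
/-- `y`. -/
def yA : Ass 2 := gen 1

/-- Equation (E1): `φ(y,0) − φ(x+y,0) = 0`. -/
def E1 (φ : Ass 2) : Prop := sub2 yA 0 φ - sub2 (xA + yA) 0 φ = 0

/-- Equation (E2): `(∂_y φ) + (∂_y φ)(y,0) − (∂_y φ)(x+y,0) − R(φ) = 0`,
where `R` is the restriction of `μ_gr` to `lie_2`. -/
def E2 (φ : Ass 2) : Prop :=
  partialD 1 φ + sub2 yA 0 (partialD 1 φ) - sub2 (xA + yA) 0 (partialD 1 φ) - muGr 2 φ = 0

/-- Equation (E3): `[x, φ(y,x)] + [y, φ(x,y)] = 0`. -/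
def E3 (φ : Ass 2) : Prop := ⁅xA, sub2 yA xA φ⁆ + ⁅yA, φ⁆ = 0

/-- `ν^em(φ) = (φ(y,x), φ(x,y))`. -/
def nuEm (φ : Ass 2) : Fin 2 → Ass 2 := ![sub2 yA xA φ, φ]

/-- The space `grt_1^em` of solutions to the linearized emergent equations. -/
def grt1em : Set (Ass 2) := {φ | φ ∈ lieN 2 ∧ E1 φ ∧ E2 φ ∧ E3 φ}

/-- The derivation `ρ(ũ)` on a word. -/
def rhoWord {N : ℕ} (u : Fin N → Ass N) : List (Fin N) → Ass N
  | [] => 0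
  | a :: t => ⁅gen a, u a⁆ * wordProd t + gen a * rhoWord u t

/-- The tangential derivation `ρ(ũ)`, determined by `ρ(ũ)(x_i) = [x_i, u_i]`. -/
def rho {N : ℕ} (u : Fin N → Ass N) : Ass N →ₗ[ℚ] Ass N := liftWord (rhoWord u)

/-- The span of commutators in `ass_N`. -/
def trRel (N : ℕ) : Submodule ℚ (Ass N) :=
  Submodule.span ℚ {z | ∃ a b : Ass N, z = a * b - b * a}

/-- The trace space `tr_N = ass_N/[ass_N, ass_N]`. -/
abbrev Tr (N : ℕ) : Type := Ass N ⧸ trRel N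

/-- The projection `|·| : ass_N → tr_N`. -/
def trM (N : ℕ) : Ass N →ₗ[ℚ] Tr N := (trRel N).mkQ

/-- The divergence `div(ũ) = Σ_i |x_i (∂_i u_i)|`. -/
def divergence {N : ℕ} (u : Fin N → Ass N) : Tr N :=
  ∑ i, trM N (gen i * partialD i (u i))

/-- `ũ ∈ tder_N`: all components lie in `lie_N`. -/
def IsTDer {N : ℕ} (u : Fin N → Ass N) : Prop := ∀ i, u i ∈ lieN N

/-- `ũ ∈ sder_N`. -/
def IsSDer {N : ℕ} (u : Fin N → Ass N) : Prop := IsTDer u ∧ rho u (∑ i, gen i) = 0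

/-- `ũ ∈ krv_N`. -/
def IsKRV {N : ℕ} (u : Fin N → Ass N) : Prop :=
  IsSDer u ∧ ∃ f : Fin (N + 1) → Polynomial ℚ,
    divergence u =
      trM N (Polynomial.aeval (∑ i, gen i) (f 0)) +
        ∑ i : Fin N, trM N (Polynomial.aeval (gen i) (f i.succ))

/-- `ũ ∈ krv_N^0`. -/
def IsKRV0 {N : ℕ} (u : Fin N → Ass N) : Prop :=
  IsSDer u ∧ ∃ cf : Fin N → ℚ, divergence u = ∑ i, cf i • trM N (gen i)

/-- The swap `u(x,y) ↦ u(y,x)`. -/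
def swapA : Ass 2 →ₐ[ℚ] Ass 2 := sub2 yA xA

/-- `ũ ∈ krv_2^sym`. -/
def IsKRVsym (u : Fin 2 → Ass 2) : Prop := IsKRV u ∧ u 1 = swapA (u 0)


/-- The coproduct `Δ` on `ass_N`, with `Δ(x_i) = x_i ⊗ 1 + 1 ⊗ x_i`. -/
def comulA (N : ℕ) : Ass N →ₐ[ℚ] (Ass N ⊗[ℚ] Ass N) :=
  FreeAlgebra.lift ℚ fun i => gen i ⊗ₜ[ℚ] (1 : Ass N) + (1 : Ass N) ⊗ₜ[ℚ] gen i

/-- `μ_{r,gr} = ((|·|∘mult) ⊗ id) ∘ (id ⊗ ((ι ⊗ id) ∘ Δ)) ∘ (id ⊗ μ_gr) ∘ Δ`. -/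
def muR (N : ℕ) : Ass N →ₗ[ℚ] Tr N ⊗[ℚ] Ass N :=
  (TensorProduct.map ((trM N).comp (LinearMap.mul' ℚ (Ass N))) LinearMap.id).comp <|
    ((TensorProduct.assoc ℚ (Ass N) (Ass N) (Ass N)).symm.toLinearMap).comp <|
      (TensorProduct.map LinearMap.id
          ((TensorProduct.map (iotaMap N) LinearMap.id).comp (comulA N).toLinearMap)).comp <|
        (TensorProduct.map LinearMap.id (muGr N)).comp (comulA N).toLinearMap

/-- `Alt(a ⊗ b) = a ⊗ b - b ⊗ a`. -/
def altMap (N : ℕ) : Tr N ⊗[ℚ] Tr N →ₗ[ℚ] Tr N ⊗[ℚ] Tr N :=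
  LinearMap.id - (TensorProduct.comm ℚ (Tr N) (Tr N)).toLinearMap

/-- The linearized Turaev cobracket `δ_gr = Alt ∘ (id ⊗ |·|) ∘ μ_{r,gr}`. -/
def Dgr (N : ℕ) : Ass N →ₗ[ℚ] Tr N ⊗[ℚ] Tr N :=
  (altMap N).comp ((TensorProduct.map LinearMap.id (trM N)).comp (muR N))

/-- Index type of the generators `t_{pq}` (`p ≠ q`) of the Drinfeld–Kohno Lie algebra. -/
def dkGenIdx (N : ℕ) : Type := {pq : Fin N × Fin N // pq.1 ≠ pq.2}

abbrev FLdk (N : ℕ) := FreeLieAlgebra ℚ (dkGenIdx N)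

def tFree {N : ℕ} (p q : Fin N) (h : p ≠ q) : FLdk N := FreeLieAlgebra.of ℚ ⟨(p, q), h⟩

/-- The defining relations of `dk_N`: symmetry, commutation and 4T. -/
def dkRels (N : ℕ) : Set (FLdk N) :=
  {z | ∃ (p q : Fin N) (h : p ≠ q), z = tFree p q h - tFree q p h.symm} ∪
  {z | ∃ (p q r s : Fin N) (hpq : p ≠ q) (hrs : r ≠ s),
      p ≠ r ∧ p ≠ s ∧ q ≠ r ∧ q ≠ s ∧ z = ⁅tFree p q hpq, tFree r s hrs⁆} ∪
  {z | ∃ (p q r : Fin N) (hpq : p ≠ q) (hqr : q ≠ r) (hpr : p ≠ r),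
      z = ⁅tFree p q hpq + tFree q r hqr, tFree p r hpr⁆}

def dkIdeal (N : ℕ) : LieIdeal ℚ (FLdk N) := LieSubmodule.lieSpan ℚ (FLdk N) (dkRels N)

/-- The Drinfeld–Kohno Lie algebra `dk_N`. -/
abbrev dk (N : ℕ) := FLdk N ⧸ dkIdeal N

/-- The generator `t_{pq}` of `dk_N`. -/
def tGen {N : ℕ} (p q : Fin N) (h : p ≠ q) : dk N :=
  LieSubmodule.Quotient.mk (N := dkIdeal N) (tFree p q h)

/-- Index type of the generators of the mixed Drinfeld–Kohno Lie algebra `dk_{m,n}`: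
pairs of distinct indices in `Fin (m+n)`, not both poles (i.e., not both `< m`). -/
def MIdx (m n : ℕ) : Type :=
  {pq : Fin (m + n) × Fin (m + n) // pq.1 ≠ pq.2 ∧ (m ≤ (pq.1 : ℕ) ∨ m ≤ (pq.2 : ℕ))}

abbrev FLmix (m n : ℕ) := FreeLieAlgebra ℚ (MIdx m n)

def tMix {m n : ℕ} (p q : Fin (m + n)) (h : p ≠ q)
    (hm : m ≤ (p : ℕ) ∨ m ≤ (q : ℕ)) : FLmix m n :=
  FreeLieAlgebra.of ℚ ⟨(p, q), h, hm⟩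

/-- The defining relations of `dk_{m,n}`: exactly the symmetry, commutation and 4T relations
of `dk_{m+n}` involving only mixed pairs. -/
def mixRels (m n : ℕ) : Set (FLmix m n) :=
  {z | ∃ (p q : Fin (m + n)) (h : p ≠ q) (hm : m ≤ (p : ℕ) ∨ m ≤ (q : ℕ)),
      z = tMix p q h hm - tMix q p h.symm hm.symm} ∪
  {z | ∃ (p q r s : Fin (m + n)) (hpq : p ≠ q) (hmpq : m ≤ (p : ℕ) ∨ m ≤ (q : ℕ))
      (hrs : r ≠ s) (hmrs : m ≤ (r : ℕ) ∨ m ≤ (s : ℕ)),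
      p ≠ r ∧ p ≠ s ∧ q ≠ r ∧ q ≠ s ∧ z = ⁅tMix p q hpq hmpq, tMix r s hrs hmrs⁆} ∪
  {z | ∃ (p q r : Fin (m + n)) (hpq : p ≠ q) (hmpq : m ≤ (p : ℕ) ∨ m ≤ (q : ℕ))
      (hqr : q ≠ r) (hmqr : m ≤ (q : ℕ) ∨ m ≤ (r : ℕ))
      (hpr : p ≠ r) (hmpr : m ≤ (p : ℕ) ∨ m ≤ (r : ℕ)),
      z = ⁅tMix p q hpq hmpq + tMix q r hqr hmqr, tMix p r hpr hmpr⁆}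

def mixIdeal (m n : ℕ) : LieIdeal ℚ (FLmix m n) :=
  LieSubmodule.lieSpan ℚ (FLmix m n) (mixRels m n)

/-- The mixed Drinfeld–Kohno Lie algebra `dk_{m,n}`. -/
abbrev dkmn (m n : ℕ) := FLmix m n ⧸ mixIdeal m n

lemma castAdd_ne_natAdd {m n : ℕ} (i : Fin m) (j : Fin n) :
    Fin.castAdd n i ≠ Fin.natAdd m j := by
  intro h
  have hv := congrArg Fin.val h
  simp only [Fin.coe_castAdd, Fin.coe_natAdd] at hv
  have := i.isLt
  omega

lemma natAdd_ne {m n : ℕ} {u v : Fin n} (h : u ≠ v) :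
    Fin.natAdd m u ≠ Fin.natAdd m v := by
  intro hh
  exact h (by
    have hv := congrArg Fin.val hh
    simp only [Fin.coe_natAdd] at hv
    exact Fin.ext (by omega))

lemma natAdd_le_left (m : ℕ) {n : ℕ} (j : Fin n) : m ≤ (Fin.natAdd m j : ℕ) := by
  simp only [Fin.coe_natAdd]; omega

/-- The generator `a_{ij}` of `dk_{m,n}` (0-indexed): `a_{ij} = t_{i(m+j)}`. -/
def aG {m n : ℕ} (i : Fin m) (j : Fin n) : dkmn m n :=
  LieSubmodule.Quotient.mk (N := mixIdeal m n)
    (tMix (Fin.castAdd n i) (Fin.natAdd m j) (castAdd_ne_natAdd i j)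
      (Or.inr (natAdd_le_left m j)))

/-- The generator `c_{ij}` of `dk_{m,n}` (0-indexed): `c_{ij} = t_{(m+i)(m+j)}`. -/
def cG {m n : ℕ} (u v : Fin n) (h : u ≠ v) : dkmn m n :=
  LieSubmodule.Quotient.mk (N := mixIdeal m n)
    (tMix (Fin.natAdd m u) (Fin.natAdd m v) (natAdd_ne h)
      (Or.inl (natAdd_le_left m u)))

/-- The Lie ideal `c` of `dk_{m,n}` generated by the `c_{ij}`. -/
def cId (m n : ℕ) : LieIdeal ℚ (dkmn m n) :=
  LieSubmodule.lieSpan ℚ (dkmn m n) {z | ∃ (u v : Fin n) (h : u ≠ v), z = cG u v h}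

/-- The Lie ideal `[c,c]`. -/
def ccId (m n : ℕ) : LieIdeal ℚ (dkmn m n) := ⁅cId m n, cId m n⁆

/-- The emergent Drinfeld–Kohno Lie algebra `edk_{m,n} = dk_{m,n}/[c,c]`. -/
abbrev edk (m n : ℕ) := dkmn m n ⧸ ccId m n

/-- Projection `dk_{m,n} → edk_{m,n}` as a function. -/
def eprojF (m n : ℕ) : dkmn m n → edk m n := LieSubmodule.Quotient.mk (N := ccId m n)

/-- Projection `dk_{m,n} → edk_{m,n}` as a `ℚ`-linear map. -/
def eproj (m n : ℕ) : dkmn m n →ₗ[ℚ] edk m n := (ccId m n).toSubmodule.mkQ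

/-- `a_{ij}` in `edk_{m,n}`. -/
def aGE {m n : ℕ} (i : Fin m) (j : Fin n) : edk m n := eprojF m n (aG i j)

/-- `c_{ij}` in `edk_{m,n}`. -/
def cGE {m n : ℕ} (u v : Fin n) (h : u ≠ v) : edk m n := eprojF m n (cG u v h)

/-- The canonical Lie algebra map `FreeLieAlgebra ℚ (Fin m) → ass_m`,
whose image is `lie_m`. -/
def toAssL (m : ℕ) : FreeLieAlgebra ℚ (Fin m) →ₗ⁅ℚ⁆ FreeAlgebra ℚ (Fin m) :=
  FreeLieAlgebra.lift ℚ (FreeAlgebra.ι ℚ)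

/-- `u ↦ u_i` (at `dk` level): the Lie algebra map with `x_p ↦ a_{pi}`. -/
def uEldk {m n : ℕ} (i : Fin n) : FreeLieAlgebra ℚ (Fin m) →ₗ⁅ℚ⁆ dkmn m n :=
  FreeLieAlgebra.lift ℚ fun p => aG p i

/-- `u ↦ u_i`: the Lie algebra map `lie_m → edk_{m,n}` with `x_p ↦ a_{pi}`. -/
def uEl {m n : ℕ} (i : Fin n) : FreeLieAlgebra ℚ (Fin m) →ₗ⁅ℚ⁆ edk m n :=
  FreeLieAlgebra.lift ℚ fun p => aGE p i

/-- Iterated bracketing `[a_{p₁ j}, [a_{p₂ j}, [… , [a_{p_d j}, ξ]…]]]`. -/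
def adWApply {m n : ℕ} (j : Fin n) : List (Fin m) → edk m n → edk m n
  | [], ξ => ξ
  | p :: t, ξ => ⁅aGE p j, adWApply j t ξ⁆


/-- `w ↦ w_{uv}`: the linear map `ass_m → edk_{m,n}` with
`1 ↦ c_{uv}` and `(x_{p₁}⋯x_{p_d}) ↦ [a_{p₁ v}, [… [a_{p_d v}, c_{uv}]…]]`. -/
def wEl {m n : ℕ} (u v : Fin n) (h : u ≠ v) : Ass m →ₗ[ℚ] edk m n :=
  liftWord fun l => adWApply v l (cGE u v h)

/-- `ad_w^{(l)}(ξ)`, linear in `w`. -/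
def adOp {m n : ℕ} (l : Fin n) (ξ : edk m n) : Ass m →ₗ[ℚ] edk m n :=
  liftWord fun lst => adWApply l lst ξ

/-- Degree-`k` part of the free Lie algebra (generators of degree 1), realized as the
preimage of the degree-`k` part of the free associative algebra under the canonical map. -/
def flHomog (X : Type) (k : ℕ) : Submodule ℚ (FreeLieAlgebra ℚ X) :=
  Submodule.comap
    (FreeLieAlgebra.lift ℚ (FreeAlgebra.ι ℚ (X := X)) :
      FreeLieAlgebra ℚ X →ₗ⁅ℚ⁆ FreeAlgebra ℚ X).toLinearMap
    (homogS X k)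

/-- Degree-`k` part of `edk_{m,n}`. -/
def edkHomog (m n : ℕ) (k : ℕ) : Submodule ℚ (edk m n) :=
  (((flHomog (MIdx m n) k).map (mixIdeal m n).toSubmodule.mkQ)).map (eproj m n)

-- Fin helper lemmas
lemma castSucc_ne_of_ne {n : ℕ} {u v : Fin n} (h : u ≠ v) :
    Fin.castSucc u ≠ Fin.castSucc v := fun hh => h (Fin.castSucc_injective n hh)

lemma succ_ne_of_ne {n : ℕ} {u v : Fin n} (h : u ≠ v) :
    Fin.succ u ≠ Fin.succ v := fun hh => h (Fin.succ_injective n hh)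

lemma castSucc_ne_last {n : ℕ} (u : Fin n) : Fin.castSucc u ≠ Fin.last n :=
  (Fin.castSucc_lt_last u).ne

lemma castSucc_ne_succ_of_le {n : ℕ} {u v : Fin n} (h : u ≤ v) :
    Fin.castSucc u ≠ Fin.succ v := by
  intro hh
  have hv := congrArg Fin.val hh
  simp only [Fin.coe_castSucc, Fin.val_succ] at hv
  have := Fin.le_def.mp h
  omega

/-- `D` is the pole coface map `δ_k : dk_{m,n} → dk_{m+1,n}`, `0 ≤ k ≤ m`
(1-indexed `k`; `k = 0` is extension on the left). -/
def IsDeltaPole (m n : ℕ) (k : ℕ) (D : dkmn m n →ₗ⁅ℚ⁆ dkmn (m + 1) n) : Prop :=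
  (∀ (i : Fin m) (j : Fin n),
     (((i : ℕ) + 1 < k) → D (aG i j) = aG (Fin.castSucc i) j) ∧
     (((i : ℕ) + 1 = k) → D (aG i j) = aG (Fin.castSucc i) j + aG (Fin.succ i) j) ∧
     ((k < (i : ℕ) + 1) → D (aG i j) = aG (Fin.succ i) j)) ∧
  (∀ (u v : Fin n) (h : u ≠ v), D (cG u v h) = cG u v h)

/-- `D` is the strand coface map `δ_{m+κ} : dk_{m,n} → dk_{m,n+1}`, `1 ≤ κ ≤ n+1`
(1-indexed strand `κ`; `κ = n+1` is extension on the right). -/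
def IsDeltaStrand (m n : ℕ) (κ : ℕ) (D : dkmn m n →ₗ⁅ℚ⁆ dkmn m (n + 1)) : Prop :=
  (∀ (i : Fin m) (j : Fin n),
     (((j : ℕ) + 1 < κ) → D (aG i j) = aG i (Fin.castSucc j)) ∧
     (((j : ℕ) + 1 = κ) → D (aG i j) = aG i (Fin.castSucc j) + aG i (Fin.succ j)) ∧
     ((κ < (j : ℕ) + 1) → D (aG i j) = aG i (Fin.succ j))) ∧
  (∀ (u v : Fin n) (h : u < v),
     (((v : ℕ) + 1 < κ) →
        D (cG u v h.ne) = cG (Fin.castSucc u) (Fin.castSucc v) (castSucc_ne_of_ne h.ne)) ∧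
     (((v : ℕ) + 1 = κ) →
        D (cG u v h.ne) = cG (Fin.castSucc u) (Fin.castSucc v) (castSucc_ne_of_ne h.ne)
          + cG (Fin.castSucc u) (Fin.succ v) (castSucc_ne_succ_of_le h.le)) ∧
     (((u : ℕ) + 1 < κ ∧ κ < (v : ℕ) + 1) →
        D (cG u v h.ne) = cG (Fin.castSucc u) (Fin.succ v) (castSucc_ne_succ_of_le h.le)) ∧
     (((u : ℕ) + 1 = κ) →
        D (cG u v h.ne) = cG (Fin.castSucc u) (Fin.succ v) (castSucc_ne_succ_of_le h.le)
          + cG (Fin.succ u) (Fin.succ v) (succ_ne_of_ne h.ne)) ∧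
     ((κ < (u : ℕ) + 1) →
        D (cG u v h.ne) = cG (Fin.succ u) (Fin.succ v) (succ_ne_of_ne h.ne)))

/-- `T` is `ϑ_{m+1} : dk_{m+1,n} → dk_{m,n+1}` (the last pole becomes the first strand). -/
def IsTheta (m n : ℕ) (T : dkmn (m + 1) n →ₗ⁅ℚ⁆ dkmn m (n + 1)) : Prop :=
  (∀ (i : Fin (m + 1)) (j : Fin n),
     (∀ hi : (i : ℕ) < m, T (aG i j) = aG ⟨i, hi⟩ (Fin.succ j)) ∧
     ((i : ℕ) = m → T (aG i j) = cG 0 (Fin.succ j) (Fin.succ_ne_zero j).symm)) ∧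
  (∀ (u v : Fin n) (h : u ≠ v), T (cG u v h) = cG (Fin.succ u) (Fin.succ v) (succ_ne_of_ne h))

/-- The coface map `d_k : dk_{m,n} → dk_{m,n+1}`, built from the data of the pole
cofaces, the strand cofaces, and `ϑ_{m+1}`. -/
def coface (m n : ℕ) (Dp : ℕ → (dkmn m n →ₗ⁅ℚ⁆ dkmn (m + 1) n))
    (Ds : ℕ → (dkmn m n →ₗ⁅ℚ⁆ dkmn m (n + 1)))
    (T : dkmn (m + 1) n →ₗ⁅ℚ⁆ dkmn m (n + 1)) (k : ℕ) :
    dkmn m n →ₗ⁅ℚ⁆ dkmn m (n + 1) :=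
  if k ≤ m then T.comp (Dp k) else Ds (k - m)

/-- The algebra map `ass_{m'+1} → ass_{m'}` with `x_p ↦ x_p` (`p < m'`) and `x_{m'} ↦ 0`. -/
def setLast0A (m' : ℕ) : Ass (m' + 1) →ₐ[ℚ] Ass m' :=
  FreeAlgebra.lift ℚ fun p : Fin (m' + 1) =>
    if h : (p : ℕ) < m' then gen ⟨p, h⟩ else 0

/-- The Lie algebra map `FreeLie (Fin (m'+1)) → FreeLie (Fin m')` setting the last
generator to `0`. -/
def flSetLast0 (m' : ℕ) : FreeLieAlgebra ℚ (Fin (m' + 1)) →ₗ⁅ℚ⁆ FreeLieAlgebra ℚ (Fin m') :=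
  FreeLieAlgebra.lift ℚ fun p : Fin (m' + 1) =>
    if h : (p : ℕ) < m' then FreeLieAlgebra.of ℚ ⟨p, h⟩ else 0




/-! ### Infrastructure for Statement 5 -/

section Statement5Proof

open Sum

/-- Label type: poles ⊕ strands. -/
abbrev Lbl (m n : ℕ) := Fin m ⊕ Fin n

/-- The generator associated to a pair of labels (0 for invalid pairs). -/
def TT {m n : ℕ} : Lbl m n → Lbl m n → dkmn m n
  | .inl p, .inr q => aG p q
  | .inr q, .inl p => aG p q
  | .inr u, .inr v => if h : u = v then 0 else cG u v h
  | .inl _, .inl _ => 0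

/-- Validity of a pair of labels. -/
def LVal {m n : ℕ} : Lbl m n → Lbl m n → Prop
  | .inl _, .inl _ => False
  | .inr u, .inr v => u ≠ v
  | _, _ => True

/-- The image labels of a label under the coface map `d_k`. -/
def im (m n k : ℕ) : Lbl m n → List (Lbl m (n + 1))
  | .inl p =>
      if k ≤ m then
        if p.val + 1 < k then [.inl p]
        else if p.val + 1 = k then
          [.inl p, if h2 : k < m then .inl ⟨k, h2⟩ else .inr 0]
        else [if h2 : p.val + 1 < m then .inl ⟨p.val + 1, h2⟩ else .inr 0]
      else [.inl p]
  | .inr q =>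
      if k ≤ m then [.inr q.succ]
      else
        if q.val + 1 < k - m then [.inr q.castSucc]
        else if q.val + 1 = k - m then [.inr q.castSucc, .inr q.succ]
        else [.inr q.succ]

/-! #### Double sums over lists -/

section S2

variable {α β γ α' β' M N : Type*} [AddCommMonoid M] [AddCommMonoid N]

/-- Double sum over a pair of lists. -/
def S2 (f : α → β → M) (L : List α) (L' : List β) : M :=
  (L.map fun a => (L'.map fun b => f a b).sum).sum

lemma sum_map_add' (l : List α) (g h : α → M) :
    (l.map fun x => g x + h x).sum = (l.map g).sum + (l.map h).sum := by
  induction l with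
  | nil => simp
  | cons a t ih => simp only [List.map_cons, List.sum_cons, ih]; abel

lemma S2_nil_left (f : α → β → M) (L' : List β) : S2 f [] L' = 0 := by simp [S2]

lemma S2_cons_left (f : α → β → M) (a : α) (t : List α) (L' : List β) :
    S2 f (a :: t) L' = (L'.map fun b => f a b).sum + S2 f t L' := by simp [S2]

lemma S2_comm (f : α → β → M) (L : List α) (L' : List β) :
    S2 f L L' = S2 (fun b a => f a b) L' L := by
  induction L with
  | nil => simp [S2]
  | cons a t ih =>
      rw [S2_cons_left, ih]
      simp only [S2, List.map_cons, List.sum_cons]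
      rw [← sum_map_add']

lemma S2_congr {f f' : α → β → M} {L : List α} {L' : List β}
    (h : ∀ a ∈ L, ∀ b ∈ L', f a b = f' a b) : S2 f L L' = S2 f' L L' := by
  unfold S2
  refine congrArg List.sum (List.map_congr_left fun a ha => ?_)
  exact congrArg List.sum (List.map_congr_left fun b hb => h a ha b hb)

lemma S2_append_left (f : α → β → M) (L1 L2 : List α) (L' : List β) :
    S2 f (L1 ++ L2) L' = S2 f L1 L' + S2 f L2 L' := by
  induction L1 with
  | nil => simp [S2]
  | cons c s ihc => simp only [List.cons_append, S2_cons_left, ihc, add_assoc]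

lemma map_S2 [Module ℚ M] [Module ℚ N] (F : M →ₗ[ℚ] N) (f : α → β → M) (L : List α) (L' : List β) :
    F (S2 f L L') = S2 (fun a b => F (f a b)) L L' := by
  simp [S2, map_list_sum, List.map_map, Function.comp_def]

lemma S2_flatMap_left (f : α' → β → M) (g : α → List α') (L : List α) (L' : List β) :
    S2 f (L.flatMap g) L' = (L.map fun x => S2 f (g x) L').sum := by
  induction L with
  | nil => simp [S2]
  | cons a t ih => simp only [List.flatMap_cons, List.map_cons, List.sum_cons, ← ih,
                     S2_append_left]

lemma S2_flatMap_right (f : α → β' → M) (g : β → List β') (L : List α) (L' : List β) :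
    S2 f L (L'.flatMap g) = (L'.map fun y => S2 f L (g y)).sum := by
  rw [S2_comm, S2_flatMap_left]
  refine congrArg List.sum (List.map_congr_left fun y _ => ?_)
  rw [S2_comm]

lemma S2_flatMap_flatMap (f : α' → β' → M) (g : α → List α') (g' : β → List β')
    (L : List α) (L' : List β) :
    S2 (fun a b => S2 f (g a) (g' b)) L L' = S2 f (L.flatMap g) (L'.flatMap g') := by
  rw [S2_flatMap_left]
  refine Eq.symm (congrArg List.sum (List.map_congr_left fun a _ => ?_))
  rw [S2_flatMap_right]

end S2

/-! #### Quotient and generator lemmas -/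

variable {m n : ℕ}

/-- The quotient projection `FLmix → dk_{m,n}` as a Lie algebra morphism. -/
def mkMix (m n : ℕ) : FLmix m n →ₗ⁅ℚ⁆ dkmn m n where
  toFun := LieSubmodule.Quotient.mk (N := mixIdeal m n)
  map_add' _ _ := rfl
  map_smul' _ _ := rfl
  map_lie' {_ _} := rfl

lemma tMix_congr {p q p' q' : Fin (m + n)} {h : p ≠ q} {hm} {h' : p' ≠ q'} {hm'}
    (hp : p = p') (hq : q = q') : tMix p q h hm = tMix p' q' h' hm' := by
  subst hp; subst hq; rfl

lemma mkMix_tMix_symm (p q : Fin (m + n)) (h : p ≠ q) (hm) :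
    mkMix m n (tMix p q h hm) = mkMix m n (tMix q p h.symm hm.symm) := by
  have hmem : tMix p q h hm - tMix q p h.symm hm.symm ∈ (mixIdeal m n).toSubmodule :=
    LieSubmodule.subset_lieSpan (Or.inl (Or.inl ⟨p, q, h, hm, rfl⟩))
  exact (Submodule.Quotient.eq ((mixIdeal m n).toSubmodule)).mpr hmem

lemma aG_congr {i i' : Fin m} {j j' : Fin n} (hi : i.val = i'.val) (hj : j.val = j'.val) :
    aG i j = aG i' j' := by
  have h1 : i = i' := Fin.ext hi
  have h2 : j = j' := Fin.ext hj
  subst h1; subst h2; rfl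

lemma cG_congr {u u' v v' : Fin n} {h : u ≠ v} {h' : u' ≠ v'}
    (hu : u.val = u'.val) (hv : v.val = v'.val) :
    (cG u v h : dkmn m n) = cG u' v' h' := by
  have h1 : u = u' := Fin.ext hu
  have h2 : v = v' := Fin.ext hv
  subst h1; subst h2; rfl

lemma cG_symm {u v : Fin n} (h : u ≠ v) : (cG u v h : dkmn m n) = cG v u h.symm := by
  show mkMix m n (tMix _ _ _ _) = mkMix m n (tMix _ _ _ _)
  rw [mkMix_tMix_symm]

lemma TT_symm (l l' : Lbl m n) : TT l l' = TT l' l := by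
  rcases l with p | u <;> rcases l' with p' | v
  · rfl
  · rfl
  · rfl
  · by_cases h : u = v
    · subst h; simp [TT]
    · simp only [TT, dif_neg h, dif_neg (Ne.symm h)]
      exact cG_symm h

lemma S2_TT_comm (L L' : List (Lbl m n)) : S2 TT L L' = S2 TT L' L := by
  rw [S2_comm]
  exact S2_congr fun a _ b _ => TT_symm b a

/-- The label of an index of `Fin (m+n)`. -/
def lbl (m n : ℕ) (p : Fin (m + n)) : Lbl m n :=
  if h : p.val < m then .inl ⟨p, h⟩ else .inr ⟨p.val - m, by have := p.isLt; omega⟩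

lemma mkMix_tMix (p q : Fin (m + n)) (h : p ≠ q) (hm) :
    mkMix m n (tMix p q h hm) = TT (lbl m n p) (lbl m n q) := by
  have hpq : p.val ≠ q.val := fun hc => h (Fin.ext hc)
  by_cases hp : p.val < m <;> by_cases hq : q.val < m
  · exfalso; omega
  · rw [lbl, dif_pos hp, lbl, dif_neg hq]
    show _ = aG _ _
    show _ = mkMix m n (tMix _ _ _ _)
    refine congrArg _ (tMix_congr ?_ ?_) <;> apply Fin.ext <;>
      simp [Fin.coe_castAdd, Fin.coe_natAdd] <;> omega
  · rw [lbl, dif_neg hp, lbl, dif_pos hq]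
    rw [mkMix_tMix_symm]
    show _ = aG _ _
    show _ = mkMix m n (tMix _ _ _ _)
    refine congrArg _ (tMix_congr ?_ ?_) <;> apply Fin.ext <;>
      simp [Fin.coe_castAdd, Fin.coe_natAdd] <;> omega
  · rw [lbl, dif_neg hp, lbl, dif_neg hq]
    have hne : (⟨p.val - m, by have := p.isLt; omega⟩ : Fin n) ≠ ⟨q.val - m, by have := q.isLt; omega⟩ := by
      simp only [ne_eq, Fin.mk.injEq]
      omega
    show _ = TT (Sum.inr _) (Sum.inr _)
    rw [show (TT (Sum.inr ⟨p.val - m, by have := p.isLt; omega⟩ : Lbl m n) (Sum.inr ⟨q.val - m, by have := q.isLt; omega⟩) : dkmn m n) = cG _ _ hne from dif_neg hne]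
    show _ = mkMix m n (tMix _ _ _ _)
    refine congrArg _ (tMix_congr ?_ ?_) <;> apply Fin.ext <;>
      simp [Fin.coe_natAdd] <;> omega

lemma lval_lbl (p q : Fin (m + n)) (h : p ≠ q) (hm : m ≤ (p : ℕ) ∨ m ≤ (q : ℕ)) :
    LVal (lbl m n p) (lbl m n q) := by
  have hpq : p.val ≠ q.val := fun hc => h (Fin.ext hc)
  by_cases hp : p.val < m <;> by_cases hq : q.val < m
  · exfalso; omega
  · rw [lbl, dif_pos hp, lbl, dif_neg hq]; trivial
  · rw [lbl, dif_neg hp, lbl, dif_pos hq]; trivial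
  · rw [lbl, dif_neg hp, lbl, dif_neg hq]
    show ¬ _ = _
    simp only [Fin.mk.injEq]
    omega

/-- Extensionality principle for morphisms out of `dk_{m,n}`. -/
lemma dkmn_ext {L : Type*} [LieRing L] [LieAlgebra ℚ L] {f g : dkmn m n →ₗ⁅ℚ⁆ L}
    (hfg : ∀ l l', LVal l l' → f (TT l l') = g (TT l l')) : f = g := by
  have key : f.comp (mkMix m n) = g.comp (mkMix m n) := by
    apply FreeLieAlgebra.hom_ext
    rintro ⟨⟨p, q⟩, hpq, hm⟩
    show f (mkMix m n (tMix p q hpq hm)) = g (mkMix m n (tMix p q hpq hm))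
    rw [mkMix_tMix]
    exact hfg _ _ (lval_lbl p q hpq hm)
  ext z
  obtain ⟨y, rfl⟩ := Submodule.Quotient.mk_surjective (mixIdeal m n).toSubmodule z
  exact LieHom.congr_fun key y


/-! #### Evaluation of coface maps on generators -/

section Eval

variable {m n : ℕ}
variable (Dp : ℕ → (dkmn m n →ₗ⁅ℚ⁆ dkmn (m + 1) n))
variable (Ds : ℕ → (dkmn m n →ₗ⁅ℚ⁆ dkmn m (n + 1)))
variable (T : dkmn (m + 1) n →ₗ⁅ℚ⁆ dkmn m (n + 1))

lemma coface_TT_a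
    (hDp : ∀ k, k ≤ m → IsDeltaPole m n k (Dp k))
    (hDs : ∀ κ, 1 ≤ κ → κ ≤ n + 1 → IsDeltaStrand m n κ (Ds κ))
    (hT : IsTheta m n T)
    {k : ℕ} (hk : k ≤ m + n + 1) (p : Fin m) (q : Fin n) :
    coface m n Dp Ds T k (aG p q) = S2 TT (im m n k (.inl p)) (im m n k (.inr q)) := by
  have hq : im m n k (.inr q) = if k ≤ m then [.inr q.succ]
      else if q.val + 1 < k - m then [.inr q.castSucc]
        else if q.val + 1 = k - m then [.inr q.castSucc, .inr q.succ]
        else [.inr q.succ] := rfl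
  rcases le_or_gt k m with hkm | hkm
  · obtain ⟨hA, _hC⟩ := hDp k hkm
    obtain ⟨hTA, hTC⟩ := hT
    simp only [coface]
    rw [if_pos hkm, LieHom.comp_apply]
    rw [hq, if_pos hkm]
    rcases lt_trichotomy (p.val + 1) k with h1 | h1 | h1
    · rw [(hA p q).1 h1, (hTA p.castSucc q).1 (by simpa using p.isLt)]
      rw [show im m n k (.inl p) = [.inl p] from by simp [im, hkm, h1]]
      simp only [S2, List.map_cons, List.map_nil, List.sum_cons, List.sum_nil, add_zero, TT]
      exact aG_congr (by simp) rfl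
    · rw [(hA p q).2.1 h1, map_add,
        (hTA p.castSucc q).1 (by simp only [Fin.coe_castSucc]; omega)]
      have him : im m n k (.inl p) =
          [.inl p, if h2 : k < m then .inl ⟨k, h2⟩ else .inr 0] := by
        simp [im, hkm, h1]
      rw [him]
      by_cases h2 : k < m
      · rw [(hTA p.succ q).1 (by simp only [Fin.val_succ]; omega), dif_pos h2]
        simp only [S2, List.map_cons, List.map_nil, List.sum_cons, List.sum_nil, add_zero, TT]
        exact congrArg₂ (· + ·) (aG_congr (by simp) rfl) (aG_congr (by simp [h1]) rfl)
      · have h2' : (p.succ : ℕ) = m := by simp only [Fin.val_succ]; omega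
        rw [(hTA p.succ q).2 h2', dif_neg h2]
        simp only [S2, List.map_cons, List.map_nil, List.sum_cons, List.sum_nil, add_zero, TT]
        rw [dif_neg (Fin.succ_ne_zero q).symm]
        exact congrArg₂ (· + ·) (aG_congr (by simp) rfl) rfl
    · rw [(hA p q).2.2 h1]
      have him : im m n k (.inl p) =
          [if h2 : p.val + 1 < m then .inl ⟨p.val + 1, h2⟩ else .inr 0] := by
        simp [im, hkm, show ¬ (p.val + 1 < k) by omega, show ¬ (p.val + 1 = k) by omega]
      rw [him]
      by_cases h2 : p.val + 1 < m
      · rw [(hTA p.succ q).1 (by simpa using h2), dif_pos h2]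
        simp only [S2, List.map_cons, List.map_nil, List.sum_cons, List.sum_nil, add_zero, TT]
        exact aG_congr (by simp) rfl
      · have h2' : (p.succ : ℕ) = m := by have := p.isLt; simp only [Fin.val_succ]; omega
        rw [(hTA p.succ q).2 h2', dif_neg h2]
        simp only [S2, List.map_cons, List.map_nil, List.sum_cons, List.sum_nil, add_zero, TT]
        rw [dif_neg (Fin.succ_ne_zero q).symm]
  · have hκ1 : 1 ≤ k - m := by omega
    have hκ2 : k - m ≤ n + 1 := by omega
    obtain ⟨hA, _hC⟩ := hDs (k - m) hκ1 hκ2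
    simp only [coface]
    rw [if_neg (by omega)]
    rw [show im m n k (.inl p) = [.inl p] from by simp [im, show ¬ k ≤ m by omega]]
    rw [hq, if_neg (by omega)]
    rcases lt_trichotomy (q.val + 1) (k - m) with h1 | h1 | h1
    · rw [(hA p q).1 h1, if_pos h1]
      simp [S2, TT]
    · rw [(hA p q).2.1 h1, if_neg (by omega), if_pos h1]
      simp [S2, TT]
    · rw [(hA p q).2.2 h1, if_neg (by omega), if_neg (by omega)]
      simp [S2, TT]

lemma coface_TT_c
    (hDp : ∀ k, k ≤ m → IsDeltaPole m n k (Dp k))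
    (hDs : ∀ κ, 1 ≤ κ → κ ≤ n + 1 → IsDeltaStrand m n κ (Ds κ))
    (hT : IsTheta m n T)
    {k : ℕ} (hk : k ≤ m + n + 1) (u v : Fin n) (hlt : u < v) :
    coface m n Dp Ds T k (cG u v hlt.ne) =
      S2 TT (im m n k (.inr u)) (im m n k (.inr v)) := by
  have hiu : ∀ w : Fin n, im m n k (.inr w) = if k ≤ m then [.inr w.succ]
      else if w.val + 1 < k - m then [.inr w.castSucc]
        else if w.val + 1 = k - m then [.inr w.castSucc, .inr w.succ]
        else [.inr w.succ] := fun _ => rfl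
  have huv : u.val < v.val := hlt
  rcases le_or_gt k m with hkm | hkm
  · obtain ⟨_hA, hC⟩ := hDp k hkm
    obtain ⟨_hTA, hTC⟩ := hT
    simp only [coface]
    rw [if_pos hkm, LieHom.comp_apply, hC u v hlt.ne, hTC u v hlt.ne]
    rw [hiu u, if_pos hkm, hiu v, if_pos hkm]
    have hne : u.succ ≠ v.succ := succ_ne_of_ne hlt.ne
    simp only [S2, List.map_cons, List.map_nil, List.sum_cons, List.sum_nil, add_zero, TT]
    rw [dif_neg hne]
  · have hκ1 : 1 ≤ k - m := by omega
    have hκ2 : k - m ≤ n + 1 := by omega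
    obtain ⟨_hA, hC⟩ := hDs (k - m) hκ1 hκ2
    simp only [coface]
    rw [if_neg (by omega)]
    have h5 := hC u v hlt
    have hkm' : ¬ k ≤ m := by omega
    rcases lt_trichotomy (v.val + 1) (k - m) with h1 | h1 | h1
    · have hu : im m n k (.inr u) = [.inr u.castSucc] := by
        simp [im, hkm', show u.val + 1 < k - m by omega]
      have hv : im m n k (.inr v) = [.inr v.castSucc] := by
        simp [im, hkm', h1]
      rw [h5.1 h1, hu, hv]
      have hne : u.castSucc ≠ v.castSucc := castSucc_ne_of_ne hlt.ne
      simp only [S2, List.map_cons, List.map_nil, List.sum_cons, List.sum_nil, add_zero, TT]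
      rw [dif_neg hne]
    · have hu : im m n k (.inr u) = [.inr u.castSucc] := by
        simp [im, hkm', show u.val + 1 < k - m by omega]
      have hv : im m n k (.inr v) = [.inr v.castSucc, .inr v.succ] := by
        simp [im, hkm', show ¬ v.val + 1 < k - m by omega, h1]
      rw [h5.2.1 h1, hu, hv]
      have hne1 : u.castSucc ≠ v.castSucc := castSucc_ne_of_ne hlt.ne
      have hne2 : u.castSucc ≠ v.succ := castSucc_ne_succ_of_le hlt.le
      simp only [S2, List.map_cons, List.map_nil, List.sum_cons, List.sum_nil, add_zero, TT]
      rw [dif_neg hne1, dif_neg hne2]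
    · have hv : im m n k (.inr v) = [.inr v.succ] := by
        simp [im, hkm', show ¬ v.val + 1 < k - m by omega, show ¬ v.val + 1 = k - m by omega]
      rcases lt_trichotomy (u.val + 1) (k - m) with h2 | h2 | h2
      · have hu : im m n k (.inr u) = [.inr u.castSucc] := by
          simp [im, hkm', h2]
        rw [h5.2.2.1 ⟨h2, by omega⟩, hu, hv]
        have hne : u.castSucc ≠ v.succ := castSucc_ne_succ_of_le hlt.le
        simp only [S2, List.map_cons, List.map_nil, List.sum_cons, List.sum_nil, add_zero, TT]
        rw [dif_neg hne]
      · have hu : im m n k (.inr u) = [.inr u.castSucc, .inr u.succ] := by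
          simp [im, hkm', show ¬ u.val + 1 < k - m by omega, h2]
        rw [h5.2.2.2.1 h2, hu, hv]
        have hne1 : u.castSucc ≠ v.succ := castSucc_ne_succ_of_le hlt.le
        have hne2 : u.succ ≠ v.succ := succ_ne_of_ne hlt.ne
        simp only [S2, List.map_cons, List.map_nil, List.sum_cons, List.sum_nil, add_zero, TT]
        rw [dif_neg hne1, dif_neg hne2]
      · have hu : im m n k (.inr u) = [.inr u.succ] := by
          simp [im, hkm', show ¬ u.val + 1 < k - m by omega, show ¬ u.val + 1 = k - m by omega]
        rw [h5.2.2.2.2 h2, hu, hv]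
        have hne : u.succ ≠ v.succ := succ_ne_of_ne hlt.ne
        simp only [S2, List.map_cons, List.map_nil, List.sum_cons, List.sum_nil, add_zero, TT]
        rw [dif_neg hne]

lemma coface_TT
    (hDp : ∀ k, k ≤ m → IsDeltaPole m n k (Dp k))
    (hDs : ∀ κ, 1 ≤ κ → κ ≤ n + 1 → IsDeltaStrand m n κ (Ds κ))
    (hT : IsTheta m n T)
    {k : ℕ} (hk : k ≤ m + n + 1) (l l' : Lbl m n) (hval : LVal l l') :
    coface m n Dp Ds T k (TT l l') = S2 TT (im m n k l) (im m n k l') := by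
  rcases l with p | u <;> rcases l' with p' | v
  · exact absurd hval (by simp [LVal])
  · exact coface_TT_a Dp Ds T hDp hDs hT hk p v
  · rw [show TT (.inr u) (.inl p') = TT (.inl p') (.inr u) from rfl, S2_TT_comm]
    exact coface_TT_a Dp Ds T hDp hDs hT hk p' u
  · have huv : u ≠ v := hval
    rcases lt_trichotomy u v with hlt | heq | hgt
    · rw [show TT (.inr u) (.inr v) = cG u v hlt.ne from dif_neg hlt.ne]
      exact coface_TT_c Dp Ds T hDp hDs hT hk u v hlt
    · exact absurd heq huv
    · rw [show TT (.inr u) (.inr v) = cG v u hgt.ne from by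
        rw [show TT (.inr u) (.inr v) = cG u v huv from dif_neg huv]
        exact cG_symm huv, S2_TT_comm]
      exact coface_TT_c Dp Ds T hDp hDs hT hk v u hgt

end Eval


/-! #### Combinatorics of the image lists -/

section Comb

variable {m n k : ℕ}

lemma im_pole_lt (p : Fin m) (hk : k ≤ m) (h : p.val + 1 < k) :
    im m n k (.inl p) = [.inl p] := by simp [im, hk, h]

lemma im_pole_eq_lt (p : Fin m) (h : p.val + 1 = k) (h2 : k < m) :
    im m n k (.inl p) = [.inl p, .inl ⟨k, h2⟩] := by
  simp [im, h2.le, h2, h, show ¬ p.val + 1 < k by omega]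

lemma im_pole_eq_eq (p : Fin m) (h : p.val + 1 = k) (h2 : k = m) :
    im m n k (.inl p) = [.inl p, .inr 0] := by
  simp [im, h2.le, h, show ¬ p.val + 1 < k by omega, show ¬ k < m by omega]

lemma im_pole_gt_lt (p : Fin m) (hk : k ≤ m) (h : k ≤ p.val) (h2 : p.val + 1 < m) :
    im m n k (.inl p) = [.inl ⟨p.val + 1, h2⟩] := by
  simp [im, hk, h2, show ¬ p.val + 1 < k by omega, show ¬ p.val + 1 = k by omega]

lemma im_pole_gt_eq (p : Fin m) (hk : k ≤ m) (h : k ≤ p.val) (h2 : p.val + 1 = m) :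
    im m n k (.inl p) = [.inr 0] := by
  simp [im, hk, show ¬ p.val + 1 < k by omega, show ¬ p.val + 1 = k by omega,
    show ¬ p.val + 1 < m by omega]

lemma im_pole_high (p : Fin m) (hk : m < k) :
    im m n k (.inl p) = [.inl p] := by simp [im, show ¬ k ≤ m by omega]

lemma im_strand_low (q : Fin n) (hk : k ≤ m) :
    im m n k (.inr q) = [.inr q.succ] := by simp [im, hk]

lemma im_strand_lt (q : Fin n) (hk : m < k) (h : q.val + 1 < k - m) :
    im m n k (.inr q) = [.inr q.castSucc] := by
  simp [im, show ¬ k ≤ m by omega, h]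

lemma im_strand_eq (q : Fin n) (hk : m < k) (h : q.val + 1 = k - m) :
    im m n k (.inr q) = [.inr q.castSucc, .inr q.succ] := by
  simp [im, show ¬ k ≤ m by omega, show ¬ q.val + 1 < k - m by omega, h]

lemma im_strand_gt (q : Fin n) (hk : m < k) (h : k - m < q.val + 1) :
    im m n k (.inr q) = [.inr q.succ] := by
  simp [im, show ¬ k ≤ m by omega, show ¬ q.val + 1 < k - m by omega,
    show ¬ q.val + 1 = k - m by omega]

lemma mem_im_pole {p : Fin m} {a : Lbl m (n + 1)} (ha : a ∈ im m n k (.inl p)) :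
    (∃ p', a = .inl p') ∨ (k ≤ m ∧ a = .inr 0) := by
  simp only [im] at ha
  split_ifs at ha <;>
    simp only [List.mem_cons, List.mem_singleton, List.not_mem_nil, or_false] at ha <;>
    first
      | (rcases ha with rfl | rfl <;> simp <;> omega)
      | (subst ha; simp <;> omega)

lemma mem_im_strand {q : Fin n} {b : Lbl m (n + 1)} (hb : b ∈ im m n k (.inr q)) :
    (k ≤ m ∧ b = .inr q.succ) ∨
      (m < k ∧ ((q.val + 1 ≤ k - m ∧ b = .inr q.castSucc) ∨
        (k - m ≤ q.val + 1 ∧ b = .inr q.succ))) := by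
  simp only [im] at hb
  split_ifs at hb <;>
    simp only [List.mem_cons, List.mem_singleton, List.not_mem_nil, or_false] at hb <;>
    first
      | (rcases hb with rfl | rfl
         · exact Or.inr ⟨by omega, Or.inl ⟨by omega, rfl⟩⟩
         · exact Or.inr ⟨by omega, Or.inr ⟨by omega, rfl⟩⟩)
      | (subst hb
         first
           | exact Or.inl ⟨by omega, rfl⟩
           | exact Or.inr ⟨by omega, Or.inl ⟨by omega, rfl⟩⟩
           | exact Or.inr ⟨by omega, Or.inr ⟨by omega, rfl⟩⟩)

lemma im_valid {l l' : Lbl m n} (hval : LVal l l') :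
    ∀ a ∈ im m n k l, ∀ b ∈ im m n k l', LVal a b := by
  intro a ha b hb
  rcases l with p | u <;> rcases l' with p' | v
  · exact absurd hval (by simp [LVal])
  · rcases mem_im_pole ha with ⟨p1, rfl⟩ | ⟨hk1, rfl⟩
    · rcases mem_im_strand hb with ⟨_, rfl⟩ | ⟨_, ⟨_, rfl⟩ | ⟨_, rfl⟩⟩ <;> trivial
    · rcases mem_im_strand hb with ⟨_, rfl⟩ | ⟨hk2, _⟩
      · show (0 : Fin (n + 1)) ≠ v.succ
        exact (Fin.succ_ne_zero v).symm

      · omega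
  · rcases mem_im_pole hb with ⟨p1, rfl⟩ | ⟨hk1, rfl⟩
    · rcases mem_im_strand ha with ⟨_, rfl⟩ | ⟨_, ⟨_, rfl⟩ | ⟨_, rfl⟩⟩ <;> trivial
    · rcases mem_im_strand ha with ⟨_, rfl⟩ | ⟨hk2, _⟩
      · show u.succ ≠ (0 : Fin (n + 1))
        exact Fin.succ_ne_zero u
      · omega
  · have huv : (u : ℕ) ≠ (v : ℕ) := fun hc => hval (Fin.ext hc)
    rcases mem_im_strand ha with ⟨hk1, rfl⟩ | ⟨hk1, h1⟩ <;>
      rcases mem_im_strand hb with ⟨hk2, rfl⟩ | ⟨hk2, h2⟩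
    · exact succ_ne_of_ne hval
    · omega
    · omega
    · rcases h1 with ⟨c1, rfl⟩ | ⟨c1, rfl⟩ <;> rcases h2 with ⟨c2, rfl⟩ | ⟨c2, rfl⟩ <;>
        (intro hcon
         simp only [Sum.inr.injEq, Fin.ext_iff, Fin.coe_castSucc, Fin.val_succ] at hcon
         omega)

lemma im_comp {m n i j : ℕ} (hij : i ≤ j) (hj : j ≤ m + n + 1) (l : Lbl m n) :
    (im m n j l).flatMap (im m (n + 1) i) = (im m n i l).flatMap (im m (n + 1) (j + 1)) := by
  have hR1 : ∀ (p : Fin m), p.val + 1 ≤ j → im m (n + 1) (j + 1) (Sum.inl p) = [.inl p] := by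
    intro p hp
    rcases le_or_gt (j + 1) m with h | h
    · exact im_pole_lt p h (by omega)
    · exact im_pole_high p h
  rcases l with p | q
  · -- pole label
    rcases le_or_gt j m with hjm | hjm
    · -- region A : i ≤ j ≤ m
      have him : i ≤ m := hij.trans hjm
      rcases lt_trichotomy (p.val + 1) i with h1 | h1 | h1
      · -- A1 : P < i
        rw [im_pole_lt (n := n) p hjm (by omega), im_pole_lt (n := n) p him h1]
        simp only [List.flatMap_cons, List.flatMap_nil, List.append_nil]
        rw [im_pole_lt (n := n + 1) p him h1, hR1 p (by omega)]
      · -- A2/A3 : P = i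
        rcases eq_or_lt_of_le hij with heq | hlt
        · -- A3 : P = i = j
          subst heq
          rcases lt_or_eq_of_le him with hm | hm
          · -- i < m
            have hv : (⟨i, hm⟩ : Fin m).val = i := rfl
            rw [im_pole_eq_lt (n := n) p h1 hm]
            simp only [List.flatMap_cons, List.flatMap_nil, List.append_nil]
            rw [im_pole_eq_lt (n := n + 1) p h1 hm, hR1 p (by omega)]
            rcases lt_or_eq_of_le (Nat.succ_le_of_lt hm) with h2 | h2
            · rw [im_pole_gt_lt (n := n + 1) (⟨i, hm⟩ : Fin m) him
                  (by simp only [hv]; omega) (by simp only [hv]; omega),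
                im_pole_eq_lt (n := n + 1) (⟨i, hm⟩ : Fin m)
                  (show (⟨i, hm⟩ : Fin m).val + 1 = i + 1 from rfl) (by omega)]
              simp [Fin.ext_iff, hv]
            · rw [im_pole_gt_eq (n := n + 1) (⟨i, hm⟩ : Fin m) him
                  (by simp only [hv]; omega) (by simp only [hv]; omega),
                im_pole_eq_eq (n := n + 1) (⟨i, hm⟩ : Fin m)
                  (show (⟨i, hm⟩ : Fin m).val + 1 = i + 1 from rfl) (by omega)]
              simp [Fin.ext_iff, hv]
          · -- i = m, P = i = j = m
            rw [im_pole_eq_eq (n := n) p h1 hm]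
            simp only [List.flatMap_cons, List.flatMap_nil, List.append_nil]
            rw [im_pole_eq_eq (n := n + 1) p h1 hm,
              im_strand_low (0 : Fin (n + 1)) (le_of_eq hm),
              hR1 p (by omega),
              im_strand_eq (0 : Fin (n + 1)) (by omega)
                (by simp only [Fin.val_zero]; omega)]
            simp [Fin.ext_iff]
        · -- A2 : P = i < j
          have him' : i < m := by omega
          have hv : (⟨i, him'⟩ : Fin m).val = i := rfl
          rw [im_pole_lt (n := n) p hjm (by omega), im_pole_eq_lt (n := n) p h1 him']
          simp only [List.flatMap_cons, List.flatMap_nil, List.append_nil]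
          rw [im_pole_eq_lt (n := n + 1) p h1 him', hR1 p (by omega)]
          have R2 : im m (n + 1) (j + 1) (Sum.inl (⟨i, him'⟩ : Fin m)) = [.inl ⟨i, him'⟩] := by
            rcases le_or_gt (j + 1) m with h | h
            · exact im_pole_lt _ h (by simp only [hv]; omega)
            · exact im_pole_high _ h
          rw [R2]
          simp
      · -- A4/A5/A6 : i < P
        rcases lt_trichotomy (p.val + 1) j with h2 | h2 | h2
        · -- A4 : i < P < j
          have hPm : p.val + 1 < m := by omega
          have hv : (⟨p.val + 1, hPm⟩ : Fin m).val = p.val + 1 := rfl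
          rw [im_pole_lt (n := n) p hjm h2, im_pole_gt_lt (n := n) p him (by omega) hPm]
          simp only [List.flatMap_cons, List.flatMap_nil, List.append_nil]
          rw [im_pole_gt_lt (n := n + 1) p him (by omega) hPm,
            hR1 (⟨p.val + 1, hPm⟩ : Fin m) (by simp only [hv]; omega)]
        · -- A5 : i < P = j
          rcases lt_or_eq_of_le hjm with hm | hm
          · have hPm : p.val + 1 < m := by omega
            have hv : (⟨p.val + 1, hPm⟩ : Fin m).val = p.val + 1 := rfl
            have hvj : (⟨j, hm⟩ : Fin m).val = j := rfl
            rw [im_pole_eq_lt (n := n) p h2 hm,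
              im_pole_gt_lt (n := n) p him (by omega) hPm]
            simp only [List.flatMap_cons, List.flatMap_nil, List.append_nil]
            rw [im_pole_gt_lt (n := n + 1) p him (by omega) hPm]
            rcases lt_or_eq_of_le (Nat.succ_le_of_lt hm) with h3 | h3
            · rw [im_pole_gt_lt (n := n + 1) (⟨j, hm⟩ : Fin m) him
                  (by simp only [hvj]; omega) (by simp only [hvj]; omega),
                im_pole_eq_lt (n := n + 1) (⟨p.val + 1, hPm⟩ : Fin m)
                  (show (⟨p.val + 1, hPm⟩ : Fin m).val + 1 = j + 1 from by
                    simp only [hv]; omega) (by omega)]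
              simp [Fin.ext_iff, hv, hvj]
            · rw [im_pole_gt_eq (n := n + 1) (⟨j, hm⟩ : Fin m) him
                  (by simp only [hvj]; omega) (by simp only [hvj]; omega),
                im_pole_eq_eq (n := n + 1) (⟨p.val + 1, hPm⟩ : Fin m)
                  (show (⟨p.val + 1, hPm⟩ : Fin m).val + 1 = j + 1 from by
                    simp only [hv]; omega) (by omega)]
              simp [Fin.ext_iff, hv, hvj]
          · -- j = m : P = m
            rw [im_pole_eq_eq (n := n) p h2 hm,
              im_pole_gt_eq (n := n) p him (by omega) (by omega)]
            simp only [List.flatMap_cons, List.flatMap_nil, List.append_nil]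
            rw [im_pole_gt_eq (n := n + 1) p him (by omega) (by omega),
              im_strand_low (0 : Fin (n + 1)) him,
              im_strand_eq (0 : Fin (n + 1)) (by omega)
                (by simp only [Fin.val_zero]; omega)]
            simp [Fin.ext_iff]
        · -- A6 : j < P  (so j < m)
          have hjm' : j + 1 ≤ m := by omega
          rcases lt_or_eq_of_le (Nat.succ_le_of_lt (by omega : p.val < m)) with h3 | h3
          · have hv : (⟨p.val + 1, h3⟩ : Fin m).val = p.val + 1 := rfl
            rw [im_pole_gt_lt (n := n) p hjm (by omega) h3,
              im_pole_gt_lt (n := n) p him (by omega) h3]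
            simp only [List.flatMap_cons, List.flatMap_nil, List.append_nil]
            rcases lt_or_eq_of_le (Nat.succ_le_of_lt h3) with h4 | h4
            · rw [im_pole_gt_lt (n := n + 1) (⟨p.val + 1, h3⟩ : Fin m) him
                  (by simp only [hv]; omega) (by simp only [hv]; omega),
                im_pole_gt_lt (n := n + 1) (⟨p.val + 1, h3⟩ : Fin m) hjm'
                  (by simp only [hv]; omega) (by simp only [hv]; omega)]
            · rw [im_pole_gt_eq (n := n + 1) (⟨p.val + 1, h3⟩ : Fin m) him
                  (by simp only [hv]; omega) (by simp only [hv]; omega),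
                im_pole_gt_eq (n := n + 1) (⟨p.val + 1, h3⟩ : Fin m) hjm'
                  (by simp only [hv]; omega) (by simp only [hv]; omega)]
          · -- P = m
            rw [im_pole_gt_eq (n := n) p hjm (by omega) h3,
              im_pole_gt_eq (n := n) p him (by omega) h3]
            simp only [List.flatMap_cons, List.flatMap_nil, List.append_nil]
            rw [im_strand_low (0 : Fin (n + 1)) him,
              im_strand_low (0 : Fin (n + 1)) hjm']
    · -- region B : m < j, pole label
      rw [im_pole_high (n := n) p hjm]
      simp only [List.flatMap_cons, List.flatMap_nil, List.append_nil]
      rcases le_or_gt i m with him | him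
      · rcases lt_trichotomy (p.val + 1) i with h1 | h1 | h1
        · rw [im_pole_lt (n := n + 1) p him h1, im_pole_lt (n := n) p him h1]
          simp only [List.flatMap_cons, List.flatMap_nil, List.append_nil]
          rw [im_pole_high (n := n + 1) p (by omega)]
        · rcases lt_or_eq_of_le him with hm | hm
          · rw [im_pole_eq_lt (n := n + 1) p h1 hm, im_pole_eq_lt (n := n) p h1 hm]
            simp only [List.flatMap_cons, List.flatMap_nil, List.append_nil]
            rw [im_pole_high (n := n + 1) p (by omega),
              im_pole_high (n := n + 1) (⟨i, hm⟩ : Fin m) (by omega)]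
            simp
          · rw [im_pole_eq_eq (n := n + 1) p h1 hm,
              im_pole_eq_eq (n := n) p h1 hm]
            simp only [List.flatMap_cons, List.flatMap_nil, List.append_nil]
            rw [im_pole_high (n := n + 1) p (by omega),
              im_strand_lt (0 : Fin (n + 1)) (by omega)
                (by simp only [Fin.val_zero]; omega)]
            simp [Fin.ext_iff]
        · rcases lt_or_eq_of_le (Nat.succ_le_of_lt (by omega : p.val < m)) with h3 | h3
          · rw [im_pole_gt_lt (n := n + 1) p him (by omega) h3,
              im_pole_gt_lt (n := n) p him (by omega) h3]
            simp only [List.flatMap_cons, List.flatMap_nil, List.append_nil]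
            rw [im_pole_high (n := n + 1) (⟨p.val + 1, h3⟩ : Fin m) (by omega)]
          · rw [im_pole_gt_eq (n := n + 1) p him (by omega) h3,
              im_pole_gt_eq (n := n) p him (by omega) h3]
            simp only [List.flatMap_cons, List.flatMap_nil, List.append_nil]
            rw [im_strand_lt (0 : Fin (n + 1)) (by omega)
              (by simp only [Fin.val_zero]; omega)]
            simp [Fin.ext_iff]
      · rw [im_pole_high (n := n + 1) p him, im_pole_high (n := n) p him]
        simp only [List.flatMap_cons, List.flatMap_nil, List.append_nil]
        rw [im_pole_high (n := n + 1) p (by omega)]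
  · -- strand label
    rcases le_or_gt j m with hjm | hjm
    · -- S1 : i ≤ j ≤ m
      have him : i ≤ m := hij.trans hjm
      rw [im_strand_low (n := n) q hjm, im_strand_low (n := n) q him]
      simp only [List.flatMap_cons, List.flatMap_nil, List.append_nil]
      rw [im_strand_low (n := n + 1) q.succ him]
      rcases le_or_gt (j + 1) m with h | h
      · rw [im_strand_low (n := n + 1) q.succ h]
      · rw [im_strand_gt (n := n + 1) q.succ h
          (by simp only [Fin.val_succ]; omega)]
    · rcases le_or_gt i m with him | him
      · -- S2 : i ≤ m < j
        rw [im_strand_low (n := n) q him]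
        simp only [List.flatMap_cons, List.flatMap_nil, List.append_nil]
        rcases lt_trichotomy (q.val + 1) (j - m) with h1 | h1 | h1
        · rw [im_strand_lt (n := n) q hjm h1]
          simp only [List.flatMap_cons, List.flatMap_nil, List.append_nil]
          rw [im_strand_low (n := n + 1) q.castSucc him,
            im_strand_lt (n := n + 1) q.succ (by omega)
              (by simp only [Fin.val_succ]; omega)]
          simp [Fin.ext_iff]
        · rw [im_strand_eq (n := n) q hjm h1]
          simp only [List.flatMap_cons, List.flatMap_nil, List.append_nil]
          rw [im_strand_low (n := n + 1) q.castSucc him,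
            im_strand_low (n := n + 1) q.succ him,
            im_strand_eq (n := n + 1) q.succ (by omega)
              (by simp only [Fin.val_succ]; omega)]
          simp [Fin.ext_iff]
        · rw [im_strand_gt (n := n) q hjm h1]
          simp only [List.flatMap_cons, List.flatMap_nil, List.append_nil]
          rw [im_strand_low (n := n + 1) q.succ him,
            im_strand_gt (n := n + 1) q.succ (by omega)
              (by simp only [Fin.val_succ]; omega)]
      · -- S3 : m < i ≤ j
        rcases lt_trichotomy (q.val + 1) (i - m) with hQi | hQi | hQi
        · -- Q < κi (≤ κj)
          rw [im_strand_lt (n := n) q hjm (by omega), im_strand_lt (n := n) q him hQi]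
          simp only [List.flatMap_cons, List.flatMap_nil, List.append_nil]
          rw [im_strand_lt (n := n + 1) q.castSucc him
              (by simp only [Fin.coe_castSucc]; omega),
            im_strand_lt (n := n + 1) q.castSucc (by omega)
              (by simp only [Fin.coe_castSucc]; omega)]
        · -- Q = κi
          rcases lt_or_eq_of_le (Nat.sub_le_sub_right hij m) with hK | hK
          · -- κi < κj
            rw [im_strand_lt (n := n) q hjm (by omega), im_strand_eq (n := n) q him hQi]
            simp only [List.flatMap_cons, List.flatMap_nil, List.append_nil]
            rw [im_strand_eq (n := n + 1) q.castSucc him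
                (by simp only [Fin.coe_castSucc]; omega),
              im_strand_lt (n := n + 1) q.castSucc (by omega)
                (by simp only [Fin.coe_castSucc]; omega),
              im_strand_lt (n := n + 1) q.succ (by omega)
                (by simp only [Fin.val_succ]; omega)]
            simp [Fin.ext_iff]
          · -- κi = κj : Q = κi = κj
            rw [im_strand_eq (n := n) q hjm (by omega), im_strand_eq (n := n) q him hQi]
            simp only [List.flatMap_cons, List.flatMap_nil, List.append_nil]
            rw [im_strand_eq (n := n + 1) q.castSucc him
                (by simp only [Fin.coe_castSucc]; omega),
              im_strand_gt (n := n + 1) q.succ him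
                (by simp only [Fin.val_succ]; omega),
              im_strand_lt (n := n + 1) q.castSucc (by omega)
                (by simp only [Fin.coe_castSucc]; omega),
              im_strand_eq (n := n + 1) q.succ (by omega)
                (by simp only [Fin.val_succ]; omega)]
            simp [Fin.ext_iff]
        · -- κi < Q
          rcases lt_trichotomy (q.val + 1) (j - m) with hQj | hQj | hQj
          · rw [im_strand_lt (n := n) q hjm hQj, im_strand_gt (n := n) q him hQi]
            simp only [List.flatMap_cons, List.flatMap_nil, List.append_nil]
            rw [im_strand_gt (n := n + 1) q.castSucc him
                (by simp only [Fin.coe_castSucc]; omega),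
              im_strand_lt (n := n + 1) q.succ (by omega)
                (by simp only [Fin.val_succ]; omega)]
            simp [Fin.ext_iff]
          · rw [im_strand_eq (n := n) q hjm hQj, im_strand_gt (n := n) q him hQi]
            simp only [List.flatMap_cons, List.flatMap_nil, List.append_nil]
            rw [im_strand_gt (n := n + 1) q.castSucc him
                (by simp only [Fin.coe_castSucc]; omega),
              im_strand_gt (n := n + 1) q.succ him
                (by simp only [Fin.val_succ]; omega),
              im_strand_eq (n := n + 1) q.succ (by omega)
                (by simp only [Fin.val_succ]; omega)]
            simp [Fin.ext_iff]
          · rw [im_strand_gt (n := n) q hjm hQj, im_strand_gt (n := n) q him hQi]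
            simp only [List.flatMap_cons, List.flatMap_nil, List.append_nil]
            rw [im_strand_gt (n := n + 1) q.succ him
                (by simp only [Fin.val_succ]; omega),
              im_strand_gt (n := n + 1) q.succ (by omega)
                (by simp only [Fin.val_succ]; omega)]

end Comb

/-! #### The composite of two coface maps on generators -/

lemma lieHom_S2 {α β : Type*} {L L' : Type*} [LieRing L] [LieAlgebra ℚ L]
    [LieRing L'] [LieAlgebra ℚ L'] (F : L →ₗ⁅ℚ⁆ L') (f : α → β → L)
    (L1 : List α) (L2 : List β) :
    F (S2 f L1 L2) = S2 (fun a b => F (f a b)) L1 L2 :=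
  map_S2 F.toLinearMap f L1 L2

lemma coface_coface {m n : ℕ}
    (Dp : ℕ → (dkmn m n →ₗ⁅ℚ⁆ dkmn (m + 1) n))
    (hDp : ∀ k, k ≤ m → IsDeltaPole m n k (Dp k))
    (Ds : ℕ → (dkmn m n →ₗ⁅ℚ⁆ dkmn m (n + 1)))
    (hDs : ∀ κ, 1 ≤ κ → κ ≤ n + 1 → IsDeltaStrand m n κ (Ds κ))
    (T : dkmn (m + 1) n →ₗ⁅ℚ⁆ dkmn m (n + 1)) (hT : IsTheta m n T)
    (Dp' : ℕ → (dkmn m (n + 1) →ₗ⁅ℚ⁆ dkmn (m + 1) (n + 1)))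
    (hDp' : ∀ k, k ≤ m → IsDeltaPole m (n + 1) k (Dp' k))
    (Ds' : ℕ → (dkmn m (n + 1) →ₗ⁅ℚ⁆ dkmn m (n + 2)))
    (hDs' : ∀ κ, 1 ≤ κ → κ ≤ n + 2 → IsDeltaStrand m (n + 1) κ (Ds' κ))
    (T' : dkmn (m + 1) (n + 1) →ₗ⁅ℚ⁆ dkmn m (n + 2)) (hT' : IsTheta m (n + 1) T')
    {k k' : ℕ} (hk : k ≤ m + n + 1) (hk' : k' ≤ m + n + 2)
    (l l' : Lbl m n) (hval : LVal l l') :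
    coface m (n + 1) Dp' Ds' T' k' (coface m n Dp Ds T k (TT l l')) =
      S2 TT ((im m n k l).flatMap (im m (n + 1) k'))
        ((im m n k l').flatMap (im m (n + 1) k')) := by
  rw [coface_TT Dp Ds T hDp hDs hT hk l l' hval]
  rw [lieHom_S2]
  rw [S2_congr (fun a ha b hb =>
    coface_TT Dp' Ds' T' hDp' hDs' hT' (show k' ≤ m + (n + 1) + 1 by omega) a b
      (im_valid hval a ha b hb))]
  exact S2_flatMap_flatMap TT (im m (n + 1) k') (im m (n + 1) k') _ _


end Statement5Proof

/-- the cosimplicial identities for the coface maps, and `d ∘ d = 0`. -/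
theorem statement5 (m n : ℕ)
    (Dp : ℕ → (dkmn m n →ₗ⁅ℚ⁆ dkmn (m + 1) n))
    (hDp : ∀ k, k ≤ m → IsDeltaPole m n k (Dp k))
    (Ds : ℕ → (dkmn m n →ₗ⁅ℚ⁆ dkmn m (n + 1)))
    (hDs : ∀ κ, 1 ≤ κ → κ ≤ n + 1 → IsDeltaStrand m n κ (Ds κ))
    (T : dkmn (m + 1) n →ₗ⁅ℚ⁆ dkmn m (n + 1)) (hT : IsTheta m n T)
    (Dp' : ℕ → (dkmn m (n + 1) →ₗ⁅ℚ⁆ dkmn (m + 1) (n + 1)))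
    (hDp' : ∀ k, k ≤ m → IsDeltaPole m (n + 1) k (Dp' k))
    (Ds' : ℕ → (dkmn m (n + 1) →ₗ⁅ℚ⁆ dkmn m (n + 2)))
    (hDs' : ∀ κ, 1 ≤ κ → κ ≤ n + 2 → IsDeltaStrand m (n + 1) κ (Ds' κ))
    (T' : dkmn (m + 1) (n + 1) →ₗ⁅ℚ⁆ dkmn m (n + 2)) (hT' : IsTheta m (n + 1) T') :
    (∀ i j : ℕ, i ≤ j → j ≤ m + n + 1 →
      (coface m (n + 1) Dp' Ds' T' i).comp (coface m n Dp Ds T j) =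
        (coface m (n + 1) Dp' Ds' T' (j + 1)).comp (coface m n Dp Ds T i)) ∧
    ((∑ k ∈ Finset.range (m + n + 3),
        ((-1 : ℚ) ^ k) • (coface m (n + 1) Dp' Ds' T' k).toLinearMap) ∘ₗ
      (∑ k ∈ Finset.range (m + n + 2),
        ((-1 : ℚ) ^ k) • (coface m n Dp Ds T k).toLinearMap) = 0) := by
  have part1 : ∀ i j : ℕ, i ≤ j → j ≤ m + n + 1 →
      (coface m (n + 1) Dp' Ds' T' i).comp (coface m n Dp Ds T j) =
        (coface m (n + 1) Dp' Ds' T' (j + 1)).comp (coface m n Dp Ds T i) := by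
    intro i j hij hj
    apply dkmn_ext
    intro l l' hval
    simp only [LieHom.comp_apply]
    rw [coface_coface Dp hDp Ds hDs T hT Dp' hDp' Ds' hDs' T' hT' hj (by omega) l l' hval,
      coface_coface Dp hDp Ds hDs T hT Dp' hDp' Ds' hDs' T' hT' (by omega) (by omega) l l' hval,
      im_comp hij hj l, im_comp hij hj l']
  refine ⟨part1, ?_⟩
  ext x
  simp only [LinearMap.comp_apply, LinearMap.sum_apply, LinearMap.smul_apply,
    LieHom.coe_toLinearMap, map_sum, map_smul, LinearMap.zero_apply, Finset.smul_sum]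
  have step : ∀ j ∈ Finset.range (m + n + 2),
      (∑ i ∈ Finset.range (m + n + 3),
        (-1 : ℚ) ^ j • (-1 : ℚ) ^ i • (coface m (n + 1) Dp' Ds' T' i)
          ((coface m n Dp Ds T j) x)) =
      (∑ i ∈ Finset.range (m + n + 3),
        (-1 : ℚ) ^ (j + i) • (coface m (n + 1) Dp' Ds' T' i)
          ((coface m n Dp Ds T j) x)) := by
    intro j _
    refine Finset.sum_congr rfl fun i _ => ?_
    rw [smul_smul, pow_add]
  rw [Finset.sum_congr rfl step, ← Finset.sum_product']
  refine Finset.sum_involution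
    (fun ji _ => if ji.2 ≤ ji.1 then (ji.2, ji.1 + 1) else (ji.2 - 1, ji.1)) ?_ ?_ ?_ ?_
  · rintro ⟨j, i⟩ hji
    simp only [Finset.mem_product, Finset.mem_range] at hji
    dsimp only
    by_cases h : i ≤ j
    · rw [if_pos h]
      dsimp only
      have hcomp := LieHom.congr_fun (part1 i j h (by omega)) x
      simp only [LieHom.comp_apply] at hcomp
      show (-1 : ℚ) ^ (j + i) • _ + (-1 : ℚ) ^ (i + (j + 1)) • _ = 0
      rw [hcomp, show i + (j + 1) = (j + i) + 1 by omega, pow_succ, mul_comm, ← smul_smul]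
      simp
    · rw [if_neg h]
      dsimp only
      have h1 : j ≤ i - 1 := by omega
      have hcomp := LieHom.congr_fun (part1 j (i - 1) h1 (by omega)) x
      simp only [LieHom.comp_apply] at hcomp
      show (-1 : ℚ) ^ (j + i) • _ + (-1 : ℚ) ^ (i - 1 + j) • _ = 0
      rw [hcomp, show i - 1 + 1 = i by omega,
        show j + i = (i - 1 + j) + 1 by omega, pow_succ, mul_comm, ← smul_smul]
      simp
  · rintro ⟨j, i⟩ hji _
    dsimp only
    by_cases h : i ≤ j
    · rw [if_pos h]
      intro hcon
      rw [Prod.ext_iff] at hcon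
      simp only at hcon
      omega
    · rw [if_neg h]
      intro hcon
      rw [Prod.ext_iff] at hcon
      simp only at hcon
      omega
  · rintro ⟨j, i⟩ hji
    simp only [Finset.mem_product, Finset.mem_range] at hji
    dsimp only
    by_cases h : i ≤ j
    · rw [if_pos h]
      exact Finset.mem_product.mpr ⟨Finset.mem_range.mpr (show i < m + n + 2 by omega),
        Finset.mem_range.mpr (show j + 1 < m + n + 3 by omega)⟩
    · rw [if_neg h]
      exact Finset.mem_product.mpr ⟨Finset.mem_range.mpr (show i - 1 < m + n + 2 by omega),
        Finset.mem_range.mpr (show j < m + n + 3 by omega)⟩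
  · rintro ⟨j, i⟩ hji
    simp only [Finset.mem_product, Finset.mem_range] at hji
    dsimp only
    by_cases h : i ≤ j
    · rw [if_pos h]
      rw [if_neg (show ¬ (j + 1 ≤ i) by omega)]
      show (j + 1 - 1, i) = (j, i)
      rw [show j + 1 - 1 = j by omega]
    · rw [if_neg h]
      rw [if_pos (show j ≤ i - 1 by omega)]
      show (j, i - 1 + 1) = (j, i)
      rw [show i - 1 + 1 = i by omega]

end
end

section
/- Let m ≥ 0, n ≥ 0 and let u, v ∈ lie_m. For every 1 ≤ j ≤ n, [u_j, v_j] = ([u,v])_j in edk_{m,n}; and for every 1 ≤ j < k ≤ n, [u_j, v_k] = (Σ_{i=1}^m (∂_i v)·x_i·ι(∂_i u))_{jk} in edk_{m,n}. -/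
noncomputable section

open scoped TensorProduct

attribute [local instance 100] LieRing.ofAssociativeRing

section St7Aux

open FreeAlgebra

/-! ### Word / basis computation lemmas -/

lemma wordProd_nil {N : ℕ} : wordProd ([] : List (Fin N)) = 1 := rfl

lemma wordProd_cons {N : ℕ} (a : Fin N) (t : List (Fin N)) :
    wordProd (a :: t) = gen a * wordProd t := by
  simp [wordProd]

lemma wordProd_append {N : ℕ} (l r : List (Fin N)) :
    wordProd (l ++ r) = wordProd l * wordProd r := by
  simp [wordProd]

lemma wordProd_singleton {N : ℕ} (a : Fin N) : wordProd [a] = gen a := by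
  simp [wordProd]

lemma equiv_wordProd {N : ℕ} (l : List (Fin N)) :
    FreeAlgebra.equivMonoidAlgebraFreeMonoid (R := ℚ) (X := Fin N) (wordProd l)
      = MonoidAlgebra.single (FreeMonoid.ofList l) 1 := by
  induction l with
  | nil =>
    rw [wordProd_nil, map_one]
    rfl
  | cons a t ih =>
    rw [wordProd_cons, map_mul, ih]
    have ha : FreeAlgebra.equivMonoidAlgebraFreeMonoid (R := ℚ) (X := Fin N) (gen a)
        = MonoidAlgebra.single (FreeMonoid.of a) 1 := by
      simp [gen, FreeAlgebra.equivMonoidAlgebraFreeMonoid, FreeAlgebra.lift_ι_apply,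
        MonoidAlgebra.of_apply]
    rw [ha, MonoidAlgebra.single_mul_single, one_mul]
    rfl

lemma basis_wordProd {N : ℕ} (l : List (Fin N)) :
    (FreeAlgebra.basisFreeMonoid ℚ (Fin N)) (FreeMonoid.ofList l) = wordProd l := by
  rw [FreeAlgebra.basisFreeMonoid, Module.Basis.map_apply]
  have : (Finsupp.basisSingleOne (R := ℚ) (ι := FreeMonoid (Fin N))) (FreeMonoid.ofList l)
      = Finsupp.single (FreeMonoid.ofList l) 1 := by
    simp [Finsupp.basisSingleOne]
  rw [this, LinearEquiv.symm_apply_eq]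
  simp only [LinearEquiv.trans_apply, AlgEquiv.toLinearEquiv_apply, equiv_wordProd]
  rfl

lemma liftWord_wordProd {N : ℕ} {A : Type} [AddCommGroup A] [Module ℚ A]
    (f : List (Fin N) → A) (l : List (Fin N)) :
    liftWord f (wordProd l) = f l := by
  rw [liftWord, ← basis_wordProd, Module.Basis.constr_basis]
  rfl

lemma span_wordProd (N : ℕ) :
    Submodule.span ℚ (Set.range (wordProd (N := N))) = ⊤ := by
  rw [← (FreeAlgebra.basisFreeMonoid ℚ (Fin N)).span_eq]
  congr 1
  ext a
  constructor
  · rintro ⟨l, rfl⟩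
    exact ⟨FreeMonoid.ofList l, basis_wordProd l⟩
  · rintro ⟨w, rfl⟩
    exact ⟨w.toList, (basis_wordProd w.toList).symm⟩

lemma assInduction {N : ℕ} {P : Ass N → Prop}
    (hw : ∀ l : List (Fin N), P (wordProd l)) (h0 : P 0)
    (hadd : ∀ x y, P x → P y → P (x + y))
    (hsmul : ∀ (c : ℚ) (x), P x → P (c • x)) (a : Ass N) : P a := by
  have ha : a ∈ Submodule.span ℚ (Set.range (wordProd (N := N))) := by
    rw [span_wordProd]; trivial
  refine Submodule.span_induction ?_ h0 (fun x y _ _ hx hy => hadd x y hx hy)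
    (fun c x _ hx => hsmul c x hx) ha
  rintro x ⟨l, rfl⟩
  exact hw l

/-! ### partial derivatives -/

lemma partialD_mul_gen {N : ℕ} (i p : Fin N) (a : Ass N) :
    partialD i (a * gen p) = if p = i then a else 0 := by
  induction a using assInduction with
  | hw l =>
    have h1 : wordProd l * gen p = wordProd (l ++ [p]) := by
      rw [wordProd_append, wordProd_singleton]
    rw [h1, partialD, liftWord_wordProd]
    simp
  | h0 => simp
  | hadd x y hx hy =>
    rw [add_mul, map_add, hx, hy]
    split <;> simp
  | hsmul c x hx =>
    rw [smul_mul_assoc, map_smul, hx]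
    split <;> simp

lemma partialD_gen {N : ℕ} (i p : Fin N) :
    partialD i (gen p) = if p = i then 1 else 0 := by
  have := partialD_mul_gen i p (1 : Ass N)
  rwa [one_mul] at this

/-! ### the antipode ι -/

lemma iota_wordProd {N : ℕ} (l : List (Fin N)) :
    iotaMap N (wordProd l) = ((-1 : ℚ) ^ l.length) • wordProd l.reverse :=
  liftWord_wordProd _ l

lemma iota_one {N : ℕ} : iotaMap N 1 = 1 := by
  have := iota_wordProd (N := N) []
  simpa [wordProd_nil] using this

lemma iota_gen {N : ℕ} (p : Fin N) : iotaMap N (gen p) = -gen p := by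
  have := iota_wordProd [p]
  rw [wordProd_singleton] at this
  simpa [wordProd_singleton] using this

lemma iota_mul {N : ℕ} (a b : Ass N) :
    iotaMap N (a * b) = iotaMap N b * iotaMap N a := by
  induction a using assInduction with
  | hw l =>
    induction b using assInduction with
    | hw r =>
      rw [← wordProd_append, iota_wordProd, iota_wordProd, iota_wordProd]
      rw [List.reverse_append, wordProd_append, List.length_append, pow_add,
        smul_mul_smul_comm, mul_comm ((-1 : ℚ) ^ r.length)]
    | h0 => simp
    | hadd x y hx hy => rw [mul_add, map_add, hx, hy, map_add, add_mul]
    | hsmul c x hx => rw [mul_smul_comm, map_smul, hx, map_smul, smul_mul_assoc]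
  | h0 => simp
  | hadd x y hx hy => rw [add_mul, map_add, hx, hy, map_add, mul_add]
  | hsmul c x hx => rw [smul_mul_assoc, map_smul, hx, map_smul, mul_smul_comm]

lemma iota_lie {N : ℕ} (a b : Ass N) :
    iotaMap N ⁅a, b⁆ = iotaMap N b * iotaMap N a - iotaMap N a * iotaMap N b := by
  rw [Ring.lie_def, map_sub, iota_mul, iota_mul]

/-! ### free Lie algebra induction -/

lemma freeLie_induction {X : Type} {P : FreeLieAlgebra ℚ X → Prop}
    (hof : ∀ x, P (FreeLieAlgebra.of ℚ x)) (h0 : P 0)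
    (hsmul : ∀ (c : ℚ) (x), P x → P (c • x))
    (hadd : ∀ x y, P x → P y → P (x + y))
    (hlie : ∀ x y, P x → P y → P ⁅x, y⁆) (a : FreeLieAlgebra ℚ X) : P a := by
  set S := LieSubalgebra.lieSpan ℚ (FreeLieAlgebra ℚ X)
    (Set.range (FreeLieAlgebra.of ℚ (X := X))) with hS
  have h : a ∈ S := by
    let g : FreeLieAlgebra ℚ X →ₗ⁅ℚ⁆ S :=
      FreeLieAlgebra.lift ℚ fun x =>
        (⟨FreeLieAlgebra.of ℚ x, LieSubalgebra.subset_lieSpan ⟨x, rfl⟩⟩ : S)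
    have hcomp : S.incl.comp g = LieHom.id := by
      apply FreeLieAlgebra.hom_ext
      intro x
      simp [g, FreeLieAlgebra.lift_of_apply, LieSubalgebra.coe_incl]
    have h2 : S.incl (g a) = a := by
      have := DFunLike.congr_fun hcomp a
      simpa using this
    rw [← h2]
    exact (g a).2
  exact LieSubalgebra.lieSpan_induction (R := ℚ) (p := fun x _ => P x)
    (by rintro x ⟨y, rfl⟩; exact hof y) h0 (fun x y _ _ hx hy => hadd x y hx hy)
    (fun c x _ hx => hsmul c x hx) (fun x y _ _ hx hy => hlie x y hx hy) h

/-! ### reconstruction a = Σ (∂ᵢ a) xᵢ for Lie elements -/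

lemma partialD_mul_of_recon {N : ℕ} (i : Fin N) (a : Ass N) {v : Ass N}
    (hv : v = ∑ j, partialD j v * gen j) :
    partialD i (a * v) = a * partialD i v := by
  conv_lhs => rw [hv]
  rw [Finset.mul_sum, map_sum]
  have hterm : ∀ j : Fin N, partialD i (a * (partialD j v * gen j))
      = if j = i then a * partialD j v else 0 := by
    intro j
    rw [← mul_assoc, partialD_mul_gen]
  rw [Finset.sum_congr rfl fun j _ => hterm j, Finset.sum_ite_eq']
  simp

lemma recon {m : ℕ} (U : FreeLieAlgebra ℚ (Fin m)) :
    toAssL m U = ∑ i, partialD i (toAssL m U) * gen i := by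
  induction U using freeLie_induction with
  | hof p =>
    have : toAssL m (FreeLieAlgebra.of ℚ p) = gen p := by
      rw [toAssL, FreeLieAlgebra.lift_of_apply]; rfl
    rw [this]
    rw [Finset.sum_congr rfl fun i _ => by rw [partialD_gen]]
    simp [ite_mul]
  | h0 => simp
  | hsmul c x hx =>
    rw [map_smul]
    simp only [map_smul, smul_mul_assoc, ← Finset.smul_sum]
    rw [← hx]
  | hadd x y hx hy =>
    rw [map_add]
    simp only [map_add, add_mul]
    rw [Finset.sum_add_distrib, ← hx, ← hy]
  | hlie x y hx hy =>
    rw [LieHom.map_lie]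
    have hb : ∀ i : Fin m, partialD i ⁅toAssL m x, toAssL m y⁆
        = toAssL m x * partialD i (toAssL m y) - toAssL m y * partialD i (toAssL m x) := by
      intro i
      rw [Ring.lie_def, map_sub, partialD_mul_of_recon i _ hy, partialD_mul_of_recon i _ hx]
    rw [Finset.sum_congr rfl fun i _ => by rw [hb i]]
    simp only [sub_mul, mul_assoc]
    rw [Finset.sum_sub_distrib, ← Finset.mul_sum, ← Finset.mul_sum, ← hx, ← hy, Ring.lie_def]

lemma partialD_lie {m : ℕ} (i : Fin m) (U V : FreeLieAlgebra ℚ (Fin m)) :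
    partialD i (toAssL m ⁅U, V⁆)
      = toAssL m U * partialD i (toAssL m V) - toAssL m V * partialD i (toAssL m U) := by
  rw [LieHom.map_lie, Ring.lie_def, map_sub, partialD_mul_of_recon i _ (recon V),
    partialD_mul_of_recon i _ (recon U)]

end St7Aux


section St7Edk

variable {m n : ℕ}

/-! ### relations in `dk_{m,n}` and `edk_{m,n}` -/

lemma mk_rel_zero {z : FLmix m n} (hz : z ∈ mixRels m n) :
    (LieSubmodule.Quotient.mk (N := mixIdeal m n) z : dkmn m n) = 0 := by
  rw [LieSubmodule.Quotient.mk_eq_zero']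
  exact LieSubmodule.subset_lieSpan hz

lemma mk_tMix_symm (P Q : Fin (m + n)) (h : P ≠ Q) (hm : m ≤ (P : ℕ) ∨ m ≤ (Q : ℕ)) :
    (LieSubmodule.Quotient.mk (N := mixIdeal m n) (tMix P Q h hm) : dkmn m n)
      = LieSubmodule.Quotient.mk (N := mixIdeal m n) (tMix Q P h.symm hm.symm) := by
  have hz : (LieSubmodule.Quotient.mk (N := mixIdeal m n)
      (tMix P Q h hm - tMix Q P h.symm hm.symm) : dkmn m n) = 0 :=
    mk_rel_zero (Or.inl (Or.inl ⟨P, Q, h, hm, rfl⟩))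
  rw [show (LieSubmodule.Quotient.mk (N := mixIdeal m n)
      (tMix P Q h hm - tMix Q P h.symm hm.symm) : dkmn m n)
      = LieSubmodule.Quotient.mk (N := mixIdeal m n) (tMix P Q h hm)
        - LieSubmodule.Quotient.mk (N := mixIdeal m n) (tMix Q P h.symm hm.symm) from
    Submodule.Quotient.mk_sub _] at hz
  exact sub_eq_zero.mp hz

lemma castAdd_ne {p q : Fin m} (h : p ≠ q) :
    Fin.castAdd n p ≠ Fin.castAdd n q := by
  intro hh
  apply h
  have hv := congrArg Fin.val hh
  simp only [Fin.coe_castAdd] at hv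
  exact Fin.ext hv

lemma relA (p : Fin m) {j k : Fin n} (hjk : j ≠ k) :
    ⁅aG p j + cG j k hjk, aG p k⁆ = (0 : dkmn m n) := by
  have hz := mk_rel_zero (z :=
    ⁅tMix (Fin.castAdd n p) (Fin.natAdd m j) (castAdd_ne_natAdd p j)
        (Or.inr (natAdd_le_left m j))
      + tMix (Fin.natAdd m j) (Fin.natAdd m k) (natAdd_ne hjk) (Or.inl (natAdd_le_left m j)),
      tMix (Fin.castAdd n p) (Fin.natAdd m k) (castAdd_ne_natAdd p k)
        (Or.inr (natAdd_le_left m k))⁆)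
    (Or.inr ⟨Fin.castAdd n p, Fin.natAdd m j, Fin.natAdd m k, castAdd_ne_natAdd p j,
      Or.inr (natAdd_le_left m j), natAdd_ne hjk, Or.inl (natAdd_le_left m j),
      castAdd_ne_natAdd p k, Or.inr (natAdd_le_left m k), rfl⟩)
  rw [LieSubmodule.Quotient.mk_bracket] at hz
  rw [show (LieSubmodule.Quotient.mk (N := mixIdeal m n)
      (tMix (Fin.castAdd n p) (Fin.natAdd m j) (castAdd_ne_natAdd p j)
          (Or.inr (natAdd_le_left m j))
        + tMix (Fin.natAdd m j) (Fin.natAdd m k) (natAdd_ne hjk)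
            (Or.inl (natAdd_le_left m j))) : dkmn m n)
      = aG p j + cG j k hjk from Submodule.Quotient.mk_add _] at hz
  exact hz

lemma relB (p : Fin m) {j k : Fin n} (hjk : j ≠ k) :
    ⁅aG p j + aG p k, cG j k hjk⁆ = (0 : dkmn m n) := by
  have hz := mk_rel_zero (z :=
    ⁅tMix (Fin.natAdd m j) (Fin.castAdd n p) (castAdd_ne_natAdd p j).symm
        (Or.inl (natAdd_le_left m j))
      + tMix (Fin.castAdd n p) (Fin.natAdd m k) (castAdd_ne_natAdd p k)
          (Or.inr (natAdd_le_left m k)),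
      tMix (Fin.natAdd m j) (Fin.natAdd m k) (natAdd_ne hjk) (Or.inl (natAdd_le_left m j))⁆)
    (Or.inr ⟨Fin.natAdd m j, Fin.castAdd n p, Fin.natAdd m k, (castAdd_ne_natAdd p j).symm,
      Or.inl (natAdd_le_left m j), castAdd_ne_natAdd p k,
      Or.inr (natAdd_le_left m k), natAdd_ne hjk, Or.inl (natAdd_le_left m j), rfl⟩)
  rw [LieSubmodule.Quotient.mk_bracket] at hz
  rw [show (LieSubmodule.Quotient.mk (N := mixIdeal m n)
      (tMix (Fin.natAdd m j) (Fin.castAdd n p) (castAdd_ne_natAdd p j).symm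
          (Or.inl (natAdd_le_left m j))
        + tMix (Fin.castAdd n p) (Fin.natAdd m k) (castAdd_ne_natAdd p k)
            (Or.inr (natAdd_le_left m k))) : dkmn m n)
      = LieSubmodule.Quotient.mk (N := mixIdeal m n)
          (tMix (Fin.natAdd m j) (Fin.castAdd n p) (castAdd_ne_natAdd p j).symm
            (Or.inl (natAdd_le_left m j)))
        + aG p k from Submodule.Quotient.mk_add _,
    mk_tMix_symm (Fin.natAdd m j) (Fin.castAdd n p)] at hz
  exact hz

lemma relC (p q : Fin m) (hpq : p ≠ q) {j k : Fin n} (hjk : j ≠ k) :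
    ⁅aG p j, aG q k⁆ = (0 : dkmn m n) := by
  have hz := mk_rel_zero (z :=
    ⁅tMix (Fin.castAdd n p) (Fin.natAdd m j) (castAdd_ne_natAdd p j)
        (Or.inr (natAdd_le_left m j)),
      tMix (Fin.castAdd n q) (Fin.natAdd m k) (castAdd_ne_natAdd q k)
        (Or.inr (natAdd_le_left m k))⁆)
    (Or.inl (Or.inr ⟨Fin.castAdd n p, Fin.natAdd m j, Fin.castAdd n q, Fin.natAdd m k,
      castAdd_ne_natAdd p j, Or.inr (natAdd_le_left m j), castAdd_ne_natAdd q k,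
      Or.inr (natAdd_le_left m k), castAdd_ne hpq, castAdd_ne_natAdd p k,
      (castAdd_ne_natAdd q j).symm, natAdd_ne hjk, rfl⟩))
  rw [LieSubmodule.Quotient.mk_bracket] at hz
  exact hz

/-! ### the ideal `c` and `[c,c] = 0` in `edk` -/

lemma cG_mem {j k : Fin n} (hjk : j ≠ k) : cG j k hjk ∈ cId m n :=
  LieSubmodule.subset_lieSpan ⟨j, k, hjk, rfl⟩

/-- dk-level version of `adWApply`. -/
def adW (k' : Fin n) : List (Fin m) → dkmn m n → dkmn m n
  | [], ξ => ξ
  | p :: t, ξ => ⁅aG p k', adW k' t ξ⁆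

lemma adW_mem (k' : Fin n) (l : List (Fin m)) {ξ : dkmn m n} (hξ : ξ ∈ cId m n) :
    adW k' l ξ ∈ cId m n := by
  induction l with
  | nil => exact hξ
  | cons p t ih => exact (cId m n).lie_mem ih

lemma eprojF_adW (k' : Fin n) (l : List (Fin m)) (ξ : dkmn m n) :
    eprojF m n (adW k' l ξ) = adWApply k' l (eprojF m n ξ) := by
  induction l with
  | nil => rfl
  | cons p t ih =>
    show ⁅aGE p k', eprojF m n (adW k' t ξ)⁆ = ⁅aGE p k', adWApply k' t (eprojF m n ξ)⁆
    rw [ih]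

lemma eproj_cc {x y : dkmn m n} (hx : x ∈ cId m n) (hy : y ∈ cId m n) :
    ⁅eprojF m n x, eprojF m n y⁆ = 0 := by
  have hm : ⁅x, y⁆ ∈ ccId m n := LieSubmodule.lie_mem_lie hx hy
  have h0 : (LieSubmodule.Quotient.mk (N := ccId m n) ⁅x, y⁆ : edk m n) = 0 := by
    rw [LieSubmodule.Quotient.mk_eq_zero']
    exact hm
  exact h0

lemma eproj_bracket (x y : dkmn m n) :
    eprojF m n ⁅x, y⁆ = ⁅eprojF m n x, eprojF m n y⁆ := rfl

lemma eRelA (p : Fin m) {j k : Fin n} (hjk : j ≠ k) :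
    ⁅aGE p j + (cGE (m := m) j k hjk), aGE p k⁆ = (0 : edk m n) := by
  have hz := congrArg (eproj m n) (relA p hjk)
  rw [map_zero] at hz
  rw [show (eproj m n) ⁅aG p j + cG j k hjk, aG p k⁆
      = ⁅eprojF m n (aG p j + cG j k hjk), eprojF m n (aG p k)⁆ from rfl] at hz
  rw [show eprojF m n (aG p j + cG j k hjk) = aGE p j + (cGE (m := m) j k hjk) from
    Submodule.Quotient.mk_add _] at hz
  exact hz

lemma eRelB (p : Fin m) {j k : Fin n} (hjk : j ≠ k) :
    ⁅aGE p j + aGE p k, (cGE (m := m) j k hjk)⁆ = (0 : edk m n) := by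
  have hz := congrArg (eproj m n) (relB p hjk)
  rw [map_zero] at hz
  rw [show (eproj m n) ⁅aG p j + aG p k, cG j k hjk⁆
      = ⁅eprojF m n (aG p j + aG p k), eprojF m n (cG j k hjk)⁆ from rfl] at hz
  rw [show eprojF m n (aG p j + aG p k) = aGE p j + aGE p k from
    Submodule.Quotient.mk_add _] at hz
  exact hz

lemma eRelC (p q : Fin m) (hpq : p ≠ q) {j k : Fin n} (hjk : j ≠ k) :
    ⁅aGE p j, aGE q k⁆ = (0 : edk m n) := by
  have hz := congrArg (eproj m n) (relC p q hpq hjk)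
  rw [map_zero] at hz
  exact hz

lemma bracket_aGE_cGE (p : Fin m) {j k : Fin n} (hjk : j ≠ k) :
    ⁅aGE p j, (cGE (m := m) j k hjk)⁆ = -⁅aGE p k, (cGE (m := m) j k hjk)⁆ := by
  have h1 := eRelB p hjk
  rw [add_lie] at h1
  exact eq_neg_of_add_eq_zero_left h1

lemma bracket_aa (p : Fin m) {j k : Fin n} (hjk : j ≠ k) :
    ⁅aGE p j, aGE p k⁆ = ⁅aGE p k, (cGE (m := m) j k hjk)⁆ := by
  have h1 := eRelA p hjk
  rw [add_lie] at h1
  rw [eq_neg_of_add_eq_zero_left h1, lie_skew]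

/-! ### `wEl` computation lemmas -/

lemma wEl_wordProd {j k : Fin n} (hjk : j ≠ k) (l : List (Fin m)) :
    wEl j k hjk (wordProd l) = adWApply k l ((cGE (m := m) j k hjk)) :=
  liftWord_wordProd _ l

lemma rightMulWord (p : Fin m) {j k : Fin n} (hjk : j ≠ k) (l : List (Fin m)) :
    ⁅aGE p j, adWApply k l ((cGE (m := m) j k hjk))⁆ = -adWApply k (l ++ [p]) ((cGE (m := m) j k hjk)) := by
  induction l with
  | nil =>
    show ⁅aGE p j, (cGE (m := m) j k hjk)⁆ = -⁅aGE p k, (cGE (m := m) j k hjk)⁆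
    exact bracket_aGE_cGE p hjk
  | cons q t ih =>
    show ⁅aGE p j, ⁅aGE q k, adWApply k t ((cGE (m := m) j k hjk))⁆⁆ = _
    rw [leibniz_lie]
    have h1 : ⁅⁅aGE p j, aGE q k⁆, adWApply k t ((cGE (m := m) j k hjk))⁆ = 0 := by
      by_cases hpq : p = q
      · subst hpq
        rw [bracket_aa p hjk]
        rw [show (⁅aGE p k, (cGE (m := m) j k hjk)⁆ : edk m n) = eprojF m n ⁅aG p k, cG j k hjk⁆ from rfl,
          show adWApply k t ((cGE (m := m) j k hjk)) = eprojF m n (adW k t (cG j k hjk)) from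
            (eprojF_adW k t _).symm]
        exact eproj_cc ((cId m n).lie_mem (cG_mem hjk)) (adW_mem k t (cG_mem hjk))
      · rw [eRelC p q hpq hjk, zero_lie]
    rw [h1, zero_add, ih, lie_neg]
    show _ = -adWApply k ((q :: t) ++ [p]) ((cGE (m := m) j k hjk))
    rw [List.cons_append]
    rfl

lemma assRightMul (p : Fin m) {j k : Fin n} (hjk : j ≠ k) (w : Ass m) :
    ⁅aGE p j, wEl j k hjk w⁆ = -wEl j k hjk (w * gen p) := by
  induction w using assInduction with
  | hw l =>
    rw [wEl_wordProd,
      show wordProd l * gen p = wordProd (l ++ [p]) by rw [wordProd_append, wordProd_singleton],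
      wEl_wordProd]
    exact rightMulWord p hjk l
  | h0 => simp
  | hadd x y hx hy => rw [map_add, lie_add, hx, hy, add_mul, map_add, neg_add]
  | hsmul c x hx => rw [map_smul, lie_smul, hx, smul_mul_assoc, map_smul, smul_neg]

lemma assLeftMul (p : Fin m) {j k : Fin n} (hjk : j ≠ k) (w : Ass m) :
    ⁅aGE p k, wEl j k hjk w⁆ = wEl j k hjk (gen p * w) := by
  induction w using assInduction with
  | hw l =>
    rw [wEl_wordProd, show gen p * wordProd l = wordProd (p :: l) from (wordProd_cons p l).symm,
      wEl_wordProd]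
    rfl
  | h0 => simp
  | hadd x y hx hy => rw [map_add, lie_add, hx, hy, mul_add, map_add]
  | hsmul c x hx => rw [map_smul, lie_smul, hx, mul_smul_comm, map_smul]

/-! ### Lie-level left/right multiplication -/

lemma uEl_of (i : Fin n) (p : Fin m) :
    uEl (m := m) (n := n) i (FreeLieAlgebra.of ℚ p) = aGE p i :=
  FreeLieAlgebra.lift_of_apply _ p

lemma toAssL_of {m' : ℕ} (p : Fin m') : toAssL m' (FreeLieAlgebra.of ℚ p) = gen p :=
  FreeLieAlgebra.lift_of_apply _ p

lemma lieRightMul {j k : Fin n} (hjk : j ≠ k) (U : FreeLieAlgebra ℚ (Fin m)) (w : Ass m) :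
    ⁅uEl j U, wEl j k hjk w⁆ = wEl j k hjk (w * iotaMap m (toAssL m U)) := by
  induction U using freeLie_induction generalizing w with
  | hof p =>
    rw [uEl_of, toAssL_of, iota_gen, mul_neg, map_neg]
    exact assRightMul p hjk w
  | h0 => rw [map_zero, zero_lie, map_zero, map_zero, mul_zero, map_zero]
  | hsmul c x hx =>
    rw [map_smul, smul_lie, hx, map_smul, map_smul, mul_smul_comm, map_smul]
  | hadd x y hx hy =>
    rw [map_add, add_lie, hx, hy, map_add, map_add, mul_add, map_add]
  | hlie x y hx hy =>
    rw [LieHom.map_lie, lie_lie, hy w, hx w, hx (w * iotaMap m (toAssL m y)),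
      hy (w * iotaMap m (toAssL m x)), LieHom.map_lie, iota_lie, mul_sub, map_sub,
      ← mul_assoc, ← mul_assoc]

lemma lieLeftMul {j k : Fin n} (hjk : j ≠ k) (V : FreeLieAlgebra ℚ (Fin m)) (w : Ass m) :
    ⁅uEl k V, wEl j k hjk w⁆ = wEl j k hjk (toAssL m V * w) := by
  induction V using freeLie_induction generalizing w with
  | hof p =>
    rw [uEl_of, toAssL_of]
    exact assLeftMul p hjk w
  | h0 => rw [map_zero, zero_lie, map_zero, zero_mul, map_zero]
  | hsmul c x hx =>
    rw [map_smul, smul_lie, hx, map_smul, smul_mul_assoc, map_smul]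
  | hadd x y hx hy =>
    rw [map_add, add_lie, hx, hy, map_add, add_mul, map_add]
  | hlie x y hx hy =>
    rw [LieHom.map_lie, lie_lie, hy w, hx w, hx (toAssL m y * w), hy (toAssL m x * w),
      LieHom.map_lie, Ring.lie_def, sub_mul, map_sub, mul_assoc, mul_assoc]

end St7Edk


section St7Main

variable {m n : ℕ}

lemma S_of_of (p q : Fin m) :
    (∑ i, partialD i (gen q) * gen i * iotaMap m (partialD i (gen p)))
      = if p = q then gen p else 0 := by
  have hterm : ∀ i : Fin m, partialD i (gen q) * gen i * iotaMap m (partialD i (gen p))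
      = if q = i then (if p = i then gen i else 0) else 0 := by
    intro i
    rw [partialD_gen, partialD_gen]
    by_cases h1 : q = i <;> by_cases h2 : p = i <;> simp [h1, h2, iota_one]
  rw [Finset.sum_congr rfl fun i _ => hterm i, Finset.sum_ite_eq]
  simp only [Finset.mem_univ, if_true]
  by_cases hpq : p = q <;> simp [hpq]

lemma main_of_of (p q : Fin m) {j k : Fin n} (hjk : j ≠ k) :
    ⁅aGE p j, aGE q k⁆ = wEl j k hjk (if p = q then gen p else 0) := by
  by_cases hpq : p = q
  · subst hpq
    rw [if_pos rfl, show (gen p : Ass m) = wordProd [p] from (wordProd_singleton p).symm,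
      wEl_wordProd]
    exact bracket_aa p hjk
  · rw [if_neg hpq, map_zero]
    exact eRelC p q hpq hjk

lemma S_lie_left (U1 U2 V : FreeLieAlgebra ℚ (Fin m)) :
    (∑ i, partialD i (toAssL m V) * gen i * iotaMap m (partialD i (toAssL m ⁅U1, U2⁆)))
      = (∑ i, partialD i (toAssL m V) * gen i * iotaMap m (partialD i (toAssL m U2)))
          * iotaMap m (toAssL m U1)
        - (∑ i, partialD i (toAssL m V) * gen i * iotaMap m (partialD i (toAssL m U1)))
          * iotaMap m (toAssL m U2) := by
  rw [Finset.sum_mul, Finset.sum_mul, ← Finset.sum_sub_distrib]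
  refine Finset.sum_congr rfl fun i _ => ?_
  rw [partialD_lie, map_sub, iota_mul, iota_mul, mul_sub]
  simp only [mul_assoc]

lemma S_lie_right (U V1 V2 : FreeLieAlgebra ℚ (Fin m)) :
    (∑ i, partialD i (toAssL m ⁅V1, V2⁆) * gen i * iotaMap m (partialD i (toAssL m U)))
      = toAssL m V1
          * (∑ i, partialD i (toAssL m V2) * gen i * iotaMap m (partialD i (toAssL m U)))
        - toAssL m V2
          * (∑ i, partialD i (toAssL m V1) * gen i * iotaMap m (partialD i (toAssL m U))) := by
  rw [Finset.mul_sum, Finset.mul_sum, ← Finset.sum_sub_distrib]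
  refine Finset.sum_congr rfl fun i _ => ?_
  rw [partialD_lie, sub_mul, sub_mul]
  simp only [mul_assoc]

lemma main_base {j k : Fin n} (hjk : j ≠ k) (q : Fin m) (U : FreeLieAlgebra ℚ (Fin m)) :
    ⁅uEl j U, uEl k (FreeLieAlgebra.of ℚ q)⁆
      = wEl j k hjk (∑ i, partialD i (toAssL m (FreeLieAlgebra.of ℚ q)) * gen i
          * iotaMap m (partialD i (toAssL m U))) := by
  induction U using freeLie_induction with
  | hof p =>
    rw [uEl_of, uEl_of]
    have hS : (∑ i, partialD i (toAssL m (FreeLieAlgebra.of ℚ q)) * gen i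
        * iotaMap m (partialD i (toAssL m (FreeLieAlgebra.of ℚ p))))
        = if p = q then gen p else 0 := by
      simp only [toAssL_of]
      exact S_of_of p q
    rw [hS]
    exact main_of_of p q hjk
  | h0 =>
    rw [map_zero, zero_lie, map_zero]
    simp
  | hsmul c x hx =>
    rw [map_smul, smul_lie, hx, map_smul]
    simp only [map_smul, mul_smul_comm, ← Finset.smul_sum]
  | hadd x y hx hy =>
    rw [map_add, add_lie, hx, hy, map_add]
    simp only [map_add, mul_add, Finset.sum_add_distrib]
  | hlie x y hx hy =>
    rw [LieHom.map_lie, lie_lie, hx, hy, lieRightMul hjk x _, lieRightMul hjk y _,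
      S_lie_left x y (FreeLieAlgebra.of ℚ q), map_sub]

lemma main_aux {j k : Fin n} (hjk : j ≠ k) (V U : FreeLieAlgebra ℚ (Fin m)) :
    ⁅uEl j U, uEl k V⁆
      = wEl j k hjk (∑ i, partialD i (toAssL m V) * gen i
          * iotaMap m (partialD i (toAssL m U))) := by
  induction V using freeLie_induction with
  | hof q => exact main_base hjk q U
  | h0 =>
    rw [map_zero, lie_zero, map_zero]
    simp
  | hsmul c x hx =>
    rw [map_smul, lie_smul, hx, map_smul]
    simp only [map_smul, smul_mul_assoc, ← Finset.smul_sum]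
  | hadd x y hx hy =>
    rw [map_add, lie_add, hx, hy, map_add]
    simp only [map_add, add_mul, Finset.sum_add_distrib]
  | hlie x y hx hy =>
    rw [LieHom.map_lie, leibniz_lie, hx, hy, ← lie_skew (wEl j k hjk _) (uEl k y),
      lieLeftMul hjk y _, lieLeftMul hjk x _, S_lie_right U x y, map_sub]
    abel

end St7Main

/-- brackets `[u_j, v_j] = [u,v]_j` and
`[u_j, v_k] = (Σ_i (∂_i v)·x_i·ι(∂_i u))_{jk}` in `edk_{m,n}`. -/
theorem statement7 (m n : ℕ) (U V : FreeLieAlgebra ℚ (Fin m)) (u v : Ass m)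
    (hU : toAssL m U = u) (hV : toAssL m V = v) :
    (∀ j : Fin n, ⁅uEl j U, uEl j V⁆ = uEl j ⁅U, V⁆) ∧
    (∀ (j k : Fin n) (h : j < k),
      ⁅uEl j U, uEl k V⁆ =
        wEl j k h.ne (∑ i, partialD i v * gen i * iotaMap m (partialD i u))) := by
  subst hU
  subst hV
  constructor
  · intro j
    exact ((uEl j).map_lie U V).symm
  · intro j k h
    exact main_aux h.ne V U

end
end
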